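/- Let G be a cofinitary group, r ∈ 2^ω, and (s,E) a condition of Z_G(r). Then there is a condition (t,E) of Z_G(r) with (t,E) ≤ (s,E) such that t has strictly more closed orbits than s, i.e. |O^c_s| < |O^c_t|. -/

import Mathlib

noncomputable section

/-- Permutations of the natural numbers (elements of `S_∞`). -/
abbrev Perm' := Equiv.Perm ℕ

/-- A letter of a word over `G ∪ {x, x⁻¹}`: either a group element (of `S_∞`),
or `Sum.inr true` standing for `x`, or `Sum.inr false` standing for `x⁻¹`. -/
abbrev Letter := Perm' ⊕ Bool

/-- A word is a list of letters, written left to right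
(the leftmost letter is applied last). -/
abbrev Word := List Letter

/-- A subgroup of `S_∞` is cofinitary if every non-identity element
has only finitely many fixed points. -/
def Cofinitary (G : Subgroup Perm') : Prop :=
  ∀ g ∈ G, g ≠ 1 → {n : ℕ | g n = n}.Finite

/-- A set of pairs is a partial injection (functional and injective). -/
def PartInj (s : Set (ℕ × ℕ)) : Prop :=
  (∀ ⦃a b c⦄, (a, b) ∈ s → (a, c) ∈ s → b = c) ∧
  (∀ ⦃a b c⦄, (a, c) ∈ s → (b, c) ∈ s → a = b)

/-- Domain of a partial injection given as a set of pairs. -/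
def pdom (s : Set (ℕ × ℕ)) : Set ℕ := Prod.fst '' s

/-- Range of a partial injection given as a set of pairs. -/
def pran (s : Set (ℕ × ℕ)) : Set ℕ := Prod.snd '' s

/-- The relation given by substituting the partial injection `s` for `x`
(and `s⁻¹` for `x⁻¹`) in a single letter. -/
def letterRel (s : Set (ℕ × ℕ)) : Letter → ℕ → ℕ → Prop
  | Sum.inl g => fun a b => g a = b
  | Sum.inr true => fun a b => (a, b) ∈ s
  | Sum.inr false => fun a b => (b, a) ∈ s

/-- The relation `w[s]`: evaluation of a word at the partial injection `s`,
composing the letter relations (rightmost letter applied first). -/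
def wordRel (s : Set (ℕ × ℕ)) : Word → ℕ → ℕ → Prop
  | [] => fun a b => a = b
  | l :: w => fun a b => ∃ c, wordRel s w a c ∧ letterRel s l c b

/-- `fix(w[s])`, the set of fixed points of the partial injection `w[s]`. -/
def wordFix (s : Set (ℕ × ℕ)) (w : Word) : Set ℕ := {n | wordRel s w n n}

/-- The word `x^k` for an integer `k` (for `k < 0`, `|k|` copies of `x⁻¹`). -/
def xpow (k : ℤ) : Word :=
  if 0 ≤ k then List.replicate k.toNat (Sum.inr true : Letter)
  else List.replicate (-k).toNat (Sum.inr false : Letter)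

/-- The block `g x^k` as a word. -/
def blockWord (p : Perm' × ℤ) : Word := Sum.inl p.1 :: xpow p.2

/-- `w` is a nice word (member of `W*_G`): `w = x^{k₀}` with `k₀ > 0`, or
`w = g_l x^{k_l} ⋯ g₁ x^{k₁} g₀ x^{k₀}` with `k₀ > 0`, all `k_i ≠ 0` and all
`g_i ∈ G \ {id}`. -/
def IsNice (G : Subgroup Perm') (w : Word) : Prop :=
  (∃ k : ℕ, 0 < k ∧ w = xpow (k : ℤ)) ∨
  (∃ bs : List (Perm' × ℤ), bs ≠ [] ∧
    (∀ p ∈ bs, p.1 ∈ G ∧ p.1 ≠ 1 ∧ p.2 ≠ 0) ∧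
    (∃ p, bs.getLast? = some p ∧ 0 < p.2) ∧
    w = (bs.map blockWord).flatten)

/-- The number of occurrences of `x` or `x⁻¹` in a word. -/
def xOccurrences (w : Word) : ℕ := w.countP (fun l => l.isRight)

/-- `w ∈ W¹_G`: a nice word with exactly one occurrence of `x` or `x⁻¹`. -/
def IsNiceOne (G : Subgroup Perm') (w : Word) : Prop :=
  IsNice G w ∧ xOccurrences w = 1

/-- `(s, E)` is a condition of Zhang's forcing `Z_G`: `s` is a finite partial
injection and `E` a finite set of nice words. -/
def ZCond (G : Subgroup Perm') (s : Set (ℕ × ℕ)) (E : Set Word) : Prop :=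
  s.Finite ∧ PartInj s ∧ E.Finite ∧ ∀ w ∈ E, IsNice G w

/-- `(t, F) ≤ (s, E)` in Zhang's forcing: `s ⊆ t`, `E ⊆ F`, and
`fix(w[t]) = fix(w[s])` for every `w ∈ E`. -/
def ZLe (t : Set (ℕ × ℕ)) (F : Set Word) (s : Set (ℕ × ℕ)) (E : Set Word) : Prop :=
  s ⊆ t ∧ E ⊆ F ∧ ∀ w ∈ E, wordFix t w = wordFix s w

/-- An injective tree: a nonempty set of finite sequences closed under initial
segments, all of whose elements are injective sequences. -/
def IsInjTree (T : Set (List ℕ)) : Prop :=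
  T.Nonempty ∧ (∀ t ∈ T, ∀ s : List ℕ, s <+: t → s ∈ T) ∧ ∀ t ∈ T, t.Nodup

/-- `T ∈ I_i(P)⁺`: an injective tree such that for every `s ∈ T` and every
finite `P₀ ⊆ P` there are `t ∈ T` extending `s` and `k ∈ dom(t) \ dom(s)` with
`t(k) ≠ f(k)` for all `f ∈ P₀`. -/
def TreePos (P : Set Perm') (T : Set (List ℕ)) : Prop :=
  IsInjTree T ∧
  ∀ s ∈ T, ∀ P₀ ⊆ P, P₀.Finite →
    ∃ t ∈ T, s <+: t ∧ ∃ k, s.length ≤ k ∧ k < t.length ∧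
      ∀ f ∈ P₀, t.getD k 0 ≠ f k

/-- A set `O` is closed under a relation `R` and its inverse. -/
def RelClosed (R : ℕ → ℕ → Prop) (O : Set ℕ) : Prop :=
  ∀ a b, R a b → (a ∈ O ↔ b ∈ O)

/-- The orbit of `n` under the (partial injective) relation `R`: the smallest
set containing `n` closed under applications of `R` and `R⁻¹`. -/
def relOrbit (R : ℕ → ℕ → Prop) (n : ℕ) : Set ℕ :=
  ⋂₀ {O : Set ℕ | n ∈ O ∧ RelClosed R O}

/-- The set of all orbits of the relation `R`. -/
def relOrbits (R : ℕ → ℕ → Prop) : Set (Set ℕ) := {O | ∃ n, O = relOrbit R n}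

/-- Domain of a relation. -/
def relDom (R : ℕ → ℕ → Prop) : Set ℕ := {a | ∃ b, R a b}

/-- Range of a relation. -/
def relRan (R : ℕ → ℕ → Prop) : Set ℕ := {b | ∃ a, R a b}

/-- The set of closed orbits of `R`: those orbits contained in `dom ∩ ran`. -/
def relClosedOrbits (R : ℕ → ℕ → Prop) : Set (Set ℕ) :=
  {O ∈ relOrbits R | O ⊆ relDom R ∩ relRan R}

/-- The relation of a partial injection given as a set of pairs. -/
def sRel (s : Set (ℕ × ℕ)) : ℕ → ℕ → Prop := fun a b => (a, b) ∈ s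

/-- The relation (graph) of a permutation of `ℕ`. -/
def permRel (f : Perm') : ℕ → ℕ → Prop := fun a b => f a = b

/-- A partial injection `s` is nice: every closed orbit has its minimum below
the minimum of the complement of the union of all closed orbits. -/
def NiceInj (s : Set (ℕ × ℕ)) : Prop :=
  ∀ O ∈ relClosedOrbits (sRel s),
    sInf O < sInf {n : ℕ | n ∉ ⋃₀ relClosedOrbits (sRel s)}

/-- The position of a closed orbit `O` of `s` in the well-order of closed
orbits by their minima. -/
def orbitIndex (s : Set (ℕ × ℕ)) (O : Set ℕ) : ℕ :=
  {P ∈ relClosedOrbits (sRel s) | sInf P < sInf O}.ncard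

/-- `s` codes `r`, i.e. `o_s ⊆ r`: the `n`-th closed orbit (in the well-order
by minima) has cardinality congruent to `r(n)` mod 2. -/
def CodesReal (s : Set (ℕ × ℕ)) (r : ℕ → Fin 2) : Prop :=
  ∀ O ∈ relClosedOrbits (sRel s), O.ncard % 2 = (r (orbitIndex s O) : ℕ)

/-- `(s, E)` is a condition of `Z_G(r)`. -/
def ZrCond (G : Subgroup Perm') (r : ℕ → Fin 2)
    (s : Set (ℕ × ℕ)) (E : Set Word) : Prop :=
  ZCond G s E ∧ NiceInj s ∧ CodesReal s r

/-- The `n`-th prime. -/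
def pPrime (n : ℕ) : ℕ := Nat.nth Nat.Prime n

/-- The orbit-coding function `o†`: `o†(n)` is the number of closed orbits of
`R` of cardinality `p_n`, modulo 2. -/
def odag (R : ℕ → ℕ → Prop) (n : ℕ) : ℕ :=
  {O ∈ relClosedOrbits R | O.ncard = pPrime n}.ncard % 2

/-- `v^k`: the word `v` concatenated `k` times. -/
def wpow (v : Word) (k : ℕ) : Word := (List.replicate k v).flatten

/-- `w ∈ W†_G`: a nice word that is indecomposable, i.e. not of the form `v^k`
for a nice word `v` and `k > 1`. -/
def Indecomposable (G : Subgroup Perm') (w : Word) : Prop :=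
  IsNice G w ∧ ¬∃ v : Word, IsNice G v ∧ ∃ k : ℕ, 1 < k ∧ w = wpow v k

/-- The inverse of a letter. -/
def letterInv : Letter → Letter
  | Sum.inl g => Sum.inl g⁻¹
  | Sum.inr b => Sum.inr (!b)

/-- The inverse of a word. -/
def wordInv (w : Word) : Word := (w.map letterInv).reverse

/-- `E` is closed under cyclic permutations and inverses thereof within `W*_G`. -/
def CyclClosed (G : Subgroup Perm') (E : Set Word) : Prop :=
  ∀ w ∈ E, ∀ w₀ w₁ : Word, w = w₀ ++ w₁ →
    (IsNice G (w₁ ++ w₀) → w₁ ++ w₀ ∈ E) ∧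
    (IsNice G (wordInv (w₁ ++ w₀)) → wordInv (w₁ ++ w₀) ∈ E)

/-- `(s, E)` is a condition of `Z†_G(r)`: a Zhang condition such that `E` is
closed under cyclic permutations and inverses thereof in `W*_G`, and whenever
`w = v^k ∈ E` with `v ∈ W†_G` then `v^l ∈ E` for all `0 < l ≤ k` and `o†_{v[s]}`
codes `r` up to `n` for every `n` with `p_n ≤ k`. -/
def ZdagCond (G : Subgroup Perm') (r : ℕ → Fin 2)
    (s : Set (ℕ × ℕ)) (E : Set Word) : Prop :=
  ZCond G s E ∧ CyclClosed G E ∧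
  ∀ w ∈ E, ∀ v : Word, ∀ k : ℕ, Indecomposable G v → w = wpow v k →
    (∀ l : ℕ, 0 < l → l ≤ k → wpow v l ∈ E) ∧
    (∀ n : ℕ, pPrime n ≤ k → ∀ i ≤ n, odag (wordRel s v) i = (r i : ℕ))

/-- Substituting the permutation `f` for `x` in a letter. -/
def letterPerm (f : Perm') : Letter → Perm'
  | Sum.inl g => g
  | Sum.inr true => f
  | Sum.inr false => f⁻¹

/-- `w[f]`: evaluation of a word at the permutation `f`. -/
def wordPerm (f : Perm') (w : Word) : Perm' := (w.map (letterPerm f)).prod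

/-- Two functions are eventually different. -/
def EvDiff (f g : ℕ → ℕ) : Prop := {k : ℕ | f k = g k}.Finite

/-- A set of permutations is an eventually different family. -/
def EDFamily (P : Set Perm') : Prop :=
  ∀ f ∈ P, ∀ g ∈ P, f ≠ g → EvDiff f g



/- ===== Part 1: basic word lemmas ===== -/

lemma letterRel_mono {s t : Set (ℕ × ℕ)} (hst : s ⊆ t) (l : Letter) {a b : ℕ}
    (h : letterRel s l a b) : letterRel t l a b := by
  rcases l with g | b'
  · exact h
  · cases b' <;> exact hst h

lemma wordRel_mono {s t : Set (ℕ × ℕ)} (hst : s ⊆ t) (v : Word) :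
    ∀ a b, wordRel s v a b → wordRel t v a b := by
  induction v with
  | nil => intro a b h; exact h
  | cons l v ih =>
    rintro a b ⟨c, h1, h2⟩
    exact ⟨c, ih a c h1, letterRel_mono hst l h2⟩

lemma wordRel_append (s : Set (ℕ × ℕ)) (v w : Word) :
    ∀ a b, wordRel s (v ++ w) a b ↔ ∃ c, wordRel s w a c ∧ wordRel s v c b := by
  induction v with
  | nil =>
    intro a b
    simp only [List.nil_append]
    constructor
    · intro h; exact ⟨b, h, rfl⟩
    · rintro ⟨c, h1, h2⟩; cases h2; exact h1
  | cons l v ih =>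
    intro a b
    constructor
    · rintro ⟨c, h1, h2⟩
      rcases (ih a c).1 h1 with ⟨d, hd1, hd2⟩
      exact ⟨d, hd1, c, hd2, h2⟩
    · rintro ⟨c, h1, d, h2, h3⟩
      exact ⟨d, (ih a d).2 ⟨c, h1, h2⟩, h3⟩

/-- start of a path whose first applied letter is `x` lies in the domain. -/
lemma wordRel_start_dom (s : Set (ℕ × ℕ)) (v : Word) :
    ∀ a b, wordRel s v a b → v.getLast? = some (Sum.inr true) → a ∈ pdom s := by
  induction v with
  | nil => intro a b _ h; simp at h
  | cons l v ih =>
    rintro a b ⟨c, h1, h2⟩ hlast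
    cases v with
    | nil =>
      cases h1
      simp only [List.getLast?_singleton, Option.some.injEq] at hlast
      subst hlast
      exact ⟨(a, b), h2, rfl⟩
    | cons l' v' =>
      have : (l' :: v').getLast? = some (Sum.inr true) := by
        rw [List.getLast?_cons_cons] at hlast; exact hlast
      exact ih a c h1 this

lemma wordRel_head_ran (s : Set (ℕ × ℕ)) (v : Word) {a b : ℕ}
    (h : wordRel s v a b) (hh : v.head? = some (Sum.inr true)) : b ∈ pran s := by
  cases v with
  | nil => simp at hh
  | cons l v =>
    simp only [List.head?_cons, Option.some.injEq] at hh
    subst hh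
    rcases h with ⟨c, _, h2⟩
    exact ⟨(c, b), h2, rfl⟩

lemma wordRel_head_dom (s : Set (ℕ × ℕ)) (v : Word) {a b : ℕ}
    (h : wordRel s v a b) (hh : v.head? = some (Sum.inr false)) : b ∈ pdom s := by
  cases v with
  | nil => simp at hh
  | cons l v =>
    simp only [List.head?_cons, Option.some.injEq] at hh
    subst hh
    rcases h with ⟨c, _, h2⟩
    exact ⟨(b, c), h2, rfl⟩

/- ===== Part 2: orbits via reachability ===== -/

inductive Reach (R : ℕ → ℕ → Prop) : ℕ → ℕ → Prop
  | refl (a : ℕ) : Reach R a a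
  | fwd {a b c : ℕ} : Reach R a b → R b c → Reach R a c
  | bwd {a b c : ℕ} : Reach R a b → R c b → Reach R a c

lemma Reach.trans {R : ℕ → ℕ → Prop} {a b c : ℕ} (h1 : Reach R a b) (h2 : Reach R b c) :
    Reach R a c := by
  induction h2 with
  | refl => exact h1
  | fwd _ hr ih => exact Reach.fwd ih hr
  | bwd _ hr ih => exact Reach.bwd ih hr

lemma Reach.symm {R : ℕ → ℕ → Prop} {a b : ℕ} (h : Reach R a b) : Reach R b a := by
  induction h with
  | refl => exact Reach.refl _
  | fwd _ hr ih => exact Reach.trans (Reach.bwd (Reach.refl _) hr) ih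
  | bwd _ hr ih => exact Reach.trans (Reach.fwd (Reach.refl _) hr) ih

lemma Reach.mono {R R' : ℕ → ℕ → Prop} (h : ∀ a b, R a b → R' a b) {a b : ℕ}
    (hr : Reach R a b) : Reach R' a b := by
  induction hr with
  | refl => exact Reach.refl _
  | fwd _ hr ih => exact Reach.fwd ih (h _ _ hr)
  | bwd _ hr ih => exact Reach.bwd ih (h _ _ hr)

lemma relOrbit_eq_reach (R : ℕ → ℕ → Prop) (n : ℕ) :
    relOrbit R n = {m | Reach R n m} := by
  apply Set.Subset.antisymm
  · intro m hm
    exact hm {m | Reach R n m} ⟨Reach.refl n, fun a b hab =>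
      ⟨fun ha => Reach.fwd ha hab, fun hb => Reach.bwd hb hab⟩⟩
  · intro m hm
    intro O hO
    rcases hO with ⟨hn, hcl⟩
    induction hm with
    | refl => exact hn
    | fwd _ hr ih => exact (hcl _ _ hr).1 ih
    | bwd _ hr ih => exact (hcl _ _ hr).2 ih

lemma mem_relOrbit_self (R : ℕ → ℕ → Prop) (n : ℕ) : n ∈ relOrbit R n := by
  rw [relOrbit_eq_reach]; exact Reach.refl n

lemma relClosed_relOrbit (R : ℕ → ℕ → Prop) (n : ℕ) : RelClosed R (relOrbit R n) := by
  intro a b hab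
  rw [relOrbit_eq_reach]
  exact ⟨fun ha => Reach.fwd ha hab, fun hb => Reach.bwd hb hab⟩

lemma relOrbit_subset (R : ℕ → ℕ → Prop) (n : ℕ) {O : Set ℕ} (hn : n ∈ O)
    (hcl : RelClosed R O) : relOrbit R n ⊆ O :=
  fun _ hm => hm O ⟨hn, hcl⟩

lemma relOrbit_eq_of_mem {R : ℕ → ℕ → Prop} {n m : ℕ} (h : m ∈ relOrbit R n) :
    relOrbit R m = relOrbit R n := by
  rw [relOrbit_eq_reach] at h
  ext x
  simp only [relOrbit_eq_reach, Set.mem_setOf_eq]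
  exact ⟨fun hx => Reach.trans h hx, fun hx => Reach.trans (Reach.symm h) hx⟩

lemma relOrbit_mono {s t : Set (ℕ × ℕ)} (hst : s ⊆ t) (n : ℕ) :
    relOrbit (sRel s) n ⊆ relOrbit (sRel t) n := by
  rw [relOrbit_eq_reach, relOrbit_eq_reach]
  exact fun m hm => Reach.mono (fun a b hab => hst hab) hm

/-- orbits are contained in dom ∪ ran ∪ {n} -/
lemma relOrbit_subset_core (s : Set (ℕ × ℕ)) (n : ℕ) :
    relOrbit (sRel s) n ⊆ pdom s ∪ pran s ∪ {n} := by
  apply relOrbit_subset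
  · exact Or.inr rfl
  · intro a b hab
    constructor
    · intro _; exact Or.inl (Or.inr ⟨(a, b), hab, rfl⟩)
    · intro _; exact Or.inl (Or.inl ⟨(a, b), hab, rfl⟩)

lemma relOrbit_finite {s : Set (ℕ × ℕ)} (hfin : s.Finite) (n : ℕ) :
    (relOrbit (sRel s) n).Finite := by
  apply Set.Finite.subset _ (relOrbit_subset_core s n)
  exact (((hfin.image Prod.fst).union (hfin.image Prod.snd)).union (Set.finite_singleton n))

/-- a closed orbit is contained in the domain -/
lemma closedOrbit_subset_dom {s : Set (ℕ × ℕ)} {O : Set ℕ}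
    (h : O ∈ relClosedOrbits (sRel s)) : O ⊆ pdom s := by
  intro x hx
  rcases h.2 hx with ⟨⟨b, hb⟩, _⟩
  exact ⟨(x, b), hb, rfl⟩

lemma relClosedOrbits_finite {s : Set (ℕ × ℕ)} (hfin : s.Finite) :
    (relClosedOrbits (sRel s)).Finite := by
  have hd : (pdom s).Finite := hfin.image Prod.fst
  apply Set.Finite.subset hd.finite_subsets
  intro O hO
  exact closedOrbit_subset_dom hO

lemma orbit_mem_finite {s : Set (ℕ × ℕ)} (hfin : s.Finite) {O : Set ℕ}
    (h : O ∈ relClosedOrbits (sRel s)) : O.Finite := by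
  rcases h.1 with ⟨n, rfl⟩
  exact relOrbit_finite hfin n

lemma sUnion_closedOrbits_finite {s : Set (ℕ × ℕ)} (hfin : s.Finite) :
    (⋃₀ relClosedOrbits (sRel s)).Finite := by
  apply Set.Finite.sUnion (relClosedOrbits_finite hfin)
  exact fun O hO => orbit_mem_finite hfin hO

/- ===== Part 3: the path structure of a non-closed orbit ===== -/

section Path

variable {s : Set (ℕ × ℕ)}

open scoped Classical in
/-- total successor function of a partial injection -/
def nextF (s : Set (ℕ × ℕ)) (a : ℕ) : ℕ :=
  if h : ∃ b, (a, b) ∈ s then h.choose else a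

open scoped Classical in
def prevF (s : Set (ℕ × ℕ)) (a : ℕ) : ℕ :=
  if h : ∃ b, (b, a) ∈ s then h.choose else a

lemma nextF_mem {a : ℕ} (ha : a ∈ pdom s) : (a, nextF s a) ∈ s := by
  rcases ha with ⟨⟨a', b⟩, hab, rfl⟩
  have h : ∃ b, (a', b) ∈ s := ⟨b, hab⟩
  rw [nextF, dif_pos h]
  exact h.choose_spec

lemma nextF_eq (hs : PartInj s) {a b : ℕ} (hab : (a, b) ∈ s) : nextF s a = b := by
  have h : a ∈ pdom s := ⟨(a, b), hab, rfl⟩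
  exact hs.1 (nextF_mem h) hab

lemma prevF_mem {a : ℕ} (ha : a ∈ pran s) : (prevF s a, a) ∈ s := by
  rcases ha with ⟨⟨b, a'⟩, hab, rfl⟩
  have h : ∃ b, (b, a') ∈ s := ⟨b, hab⟩
  rw [prevF, dif_pos h]
  exact h.choose_spec

lemma prevF_eq (hs : PartInj s) {a b : ℕ} (hab : (b, a) ∈ s) : prevF s a = b := by
  have h : a ∈ pran s := ⟨(b, a), hab, rfl⟩
  exact hs.2 (prevF_mem h) hab

lemma nextF_frozen {a : ℕ} (ha : a ∉ pdom s) : nextF s a = a := by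
  rw [nextF, dif_neg]
  rintro ⟨b, hb⟩
  exact ha ⟨(a, b), hb, rfl⟩

lemma prevF_frozen {a : ℕ} (ha : a ∉ pran s) : prevF s a = a := by
  rw [prevF, dif_neg]
  rintro ⟨b, hb⟩
  exact ha ⟨(b, a), hb, rfl⟩

/-- if every forward iterate stays in the domain, the orbit is closed -/
lemma orbit_closed_of_forward (hs : PartInj s) (hfin : s.Finite) (m : ℕ)
    (hfwd : ∀ k : ℕ, (nextF s)^[k] m ∈ pdom s) :
    relOrbit (sRel s) m ∈ relClosedOrbits (sRel s) := by
  set S : Set ℕ := Set.range (fun k => (nextF s)^[k] m) with hS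
  have hSdom : S ⊆ pdom s := by rintro x ⟨k, rfl⟩; exact hfwd k
  have hSfin : S.Finite := Set.Finite.subset (hfin.image Prod.fst) hSdom
  have hmS : m ∈ S := ⟨0, rfl⟩
  -- nextF maps S to S and is injective on S
  have hmaps : Set.MapsTo (nextF s) S S := by rintro x ⟨k, rfl⟩; exact ⟨k + 1, Function.iterate_succ_apply' _ _ _⟩
  have hinj : Set.InjOn (nextF s) S := by
    intro x hx y hy hxy
    have h1 := nextF_mem (s := s) (hSdom hx)
    have h2 := nextF_mem (s := s) (hSdom hy)
    rw [hxy] at h1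
    exact hs.2 h1 h2
  have hsurj : Set.SurjOn (nextF s) S S := hSfin.surjOn_iff_bijOn_of_mapsTo hmaps |>.2 (hSfin.injOn_iff_bijOn_of_mapsTo hmaps |>.1 hinj)
  -- S is RelClosed
  have hcl : RelClosed (sRel s) S := by
    intro a b hab
    constructor
    · intro ha
      have := nextF_eq hs hab
      rw [← this]
      exact hmaps ha
    · intro hb
      rcases hsurj hb with ⟨x, hx, hxb⟩
      have : (x, b) ∈ s := by rw [← hxb]; exact nextF_mem (hSdom hx)
      have := hs.2 hab this
      rwa [this]
  have horb : relOrbit (sRel s) m ⊆ S := relOrbit_subset _ _ hmS hcl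
  refine ⟨⟨m, rfl⟩, ?_⟩
  intro x hx
  have hxS := horb hx
  constructor
  · rcases nextF_mem (s := s) (hSdom hxS) with h
    exact ⟨_, h⟩
  · -- x ∈ ran : use surjectivity
    rcases hsurj hxS with ⟨y, hy, hyx⟩
    have : (y, x) ∈ s := by rw [← hyx]; exact nextF_mem (hSdom hy)
    exact ⟨y, this⟩

lemma orbit_closed_of_backward (hs : PartInj s) (hfin : s.Finite) (m : ℕ)
    (hbwd : ∀ k : ℕ, (prevF s)^[k] m ∈ pran s) :
    relOrbit (sRel s) m ∈ relClosedOrbits (sRel s) := by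
  -- mirror: apply forward lemma to the inverse injection
  set s' : Set (ℕ × ℕ) := Prod.swap '' s with hs'
  have hmem : ∀ a b : ℕ, (a, b) ∈ s' ↔ (b, a) ∈ s := by
    intro a b
    constructor
    · rintro ⟨⟨x, y⟩, hxy, h⟩
      cases h
      exact hxy
    · intro h
      exact ⟨(b, a), h, rfl⟩
  have hs'p : PartInj s' := by
    constructor
    · intro a b c h1 h2
      exact hs.2 ((hmem a b).1 h1) ((hmem a c).1 h2)
    · intro a b c h1 h2
      exact hs.1 ((hmem a c).1 h1) ((hmem b c).1 h2)
  have hdom' : pdom s' = pran s := by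
    ext x
    constructor
    · rintro ⟨⟨a, b⟩, hab, rfl⟩
      exact ⟨(b, a), (hmem a b).1 hab, rfl⟩
    · rintro ⟨⟨a, b⟩, hab, rfl⟩
      exact ⟨(b, a), (hmem b a).2 hab, rfl⟩
  have hnext' : ∀ a, nextF s' a = prevF s a := by
    intro a
    by_cases h : a ∈ pran s
    · exact nextF_eq hs'p ((hmem a (prevF s a)).2 (prevF_mem h))
    · rw [nextF_frozen, prevF_frozen h]
      rw [hdom']; exact h
  have hiter : ∀ k a, (nextF s')^[k] a = (prevF s)^[k] a := by
    intro k
    induction k with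
    | zero => intro a; rfl
    | succ k ih => intro a; rw [Function.iterate_succ_apply, Function.iterate_succ_apply, hnext', ih]
  have h1 : relOrbit (sRel s') m ∈ relClosedOrbits (sRel s') := by
    apply orbit_closed_of_forward hs'p (hfin.image Prod.swap) m
    intro k
    rw [hiter, hdom']
    exact hbwd k
  -- transfer back
  have horb : ∀ n, relOrbit (sRel s') n = relOrbit (sRel s) n := by
    intro n
    rw [relOrbit_eq_reach, relOrbit_eq_reach]
    ext x
    simp only [Set.mem_setOf_eq]
    constructor
    · intro h
      induction h with
      | refl => exact Reach.refl _
      | fwd _ hr ih => exact Reach.bwd ih ((hmem _ _).1 hr)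
      | bwd _ hr ih => exact Reach.fwd ih ((hmem _ _).1 hr)
    · intro h
      induction h with
      | refl => exact Reach.refl _
      | fwd _ hr ih => exact Reach.bwd ih ((hmem _ _).2 hr)
      | bwd _ hr ih => exact Reach.fwd ih ((hmem _ _).2 hr)
  rcases h1 with ⟨_, hsub⟩
  refine ⟨⟨m, rfl⟩, ?_⟩
  rw [← horb]
  intro x hx
  rcases hsub hx with ⟨⟨b, hb⟩, ⟨a, ha⟩⟩
  exact ⟨⟨a, (hmem a x).1 ha⟩, ⟨b, (hmem x b).1 hb⟩⟩

end Path

/- ===== Part 4: explicit path for a non-closed orbit ===== -/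

lemma path_package {s : Set (ℕ × ℕ)} (hs : PartInj s) (hfin : s.Finite) (m : ℕ)
    (hnc : relOrbit (sRel s) m ∉ relClosedOrbits (sRel s)) :
    ∃ (q : ℕ) (pp : ℕ → ℕ),
      (∃ α, α ≤ q ∧ pp α = m) ∧
      (∀ α, α < q → (pp α, pp (α + 1)) ∈ s) ∧
      pp 0 ∉ pran s ∧ pp q ∉ pdom s ∧
      (∀ α β, α ≤ q → β ≤ q → pp α = pp β → α = β) ∧
      relOrbit (sRel s) m = pp '' Set.Iic q := by
  classical
  set F := nextF s with hF
  set B := prevF s with hB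
  have hfex : ∃ k, F^[k] m ∉ pdom s := by
    by_contra h
    push_neg at h
    exact hnc (orbit_closed_of_forward hs hfin m h)
  have hbex : ∃ k, B^[k] m ∉ pran s := by
    by_contra h
    push_neg at h
    exact hnc (orbit_closed_of_backward hs hfin m h)
  set kf := Nat.find hfex with hkfdef
  set kb := Nat.find hbex with hkbdef
  have hkf : F^[kf] m ∉ pdom s := Nat.find_spec hfex
  have hkb : B^[kb] m ∉ pran s := Nat.find_spec hbex
  have hflt : ∀ l, l < kf → F^[l] m ∈ pdom s := by
    intro l hl
    by_contra h
    have h2 : kf ≤ l := Nat.find_le h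
    omega
  have hblt : ∀ l, l < kb → B^[l] m ∈ pran s := by
    intro l hl
    by_contra h
    have h2 : kb ≤ l := Nat.find_le h
    omega
  -- basic pair facts
  have hbpair : ∀ l, l < kb → (B^[l + 1] m, B^[l] m) ∈ s := by
    intro l hl
    have : B^[l + 1] m = B (B^[l] m) := Function.iterate_succ_apply' _ _ _
    rw [this]
    exact prevF_mem (hblt l hl)
  have hfpair : ∀ l, l < kf → (F^[l] m, F^[l + 1] m) ∈ s := by
    intro l hl
    have : F^[l + 1] m = F (F^[l] m) := Function.iterate_succ_apply' _ _ _
    rw [this]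
    exact nextF_mem (hflt l hl)
  have cancel : ∀ l, l ≤ kb → F^[l] (B^[l] m) = m := by
    intro l
    induction l with
    | zero => intro _; rfl
    | succ l ih =>
      intro hl
      have h1 : F (B^[l + 1] m) = B^[l] m := nextF_eq hs (hbpair l (by omega))
      calc F^[l + 1] (B^[l + 1] m) = F^[l] (F (B^[l+1] m)) := Function.iterate_succ_apply _ _ _
        _ = F^[l] (B^[l] m) := by rw [h1]
        _ = m := ih (by omega)
  have freeze : ∀ l, kf ≤ l → F^[l] m = F^[kf] m := by
    intro l hl
    induction l with
    | zero =>
      have h0 : kf = 0 := by omega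
      rw [h0]
    | succ l ih =>
      rcases Nat.lt_or_ge l kf with h | h
      · have h0 : kf = l + 1 := by omega
        rw [h0]
      · rw [Function.iterate_succ_apply', ih h, show F = nextF s from rfl, nextF_frozen hkf]
  set q := kb + kf with hq
  set pp : ℕ → ℕ := fun α => if α ≤ kb then B^[kb - α] m else F^[α - kb] m with hpp
  have hppkb : pp kb = m := by simp [hpp]
  have hppb : ∀ α, α ≤ kb → pp α = B^[kb - α] m := by intro α h; simp [hpp, h]
  have hppf : ∀ α, kb ≤ α → pp α = F^[α - kb] m := by
    intro α h
    rcases Nat.eq_or_lt_of_le h with rfl | h'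
    · simp [hpp]
    · simp only [hpp]
      rw [if_neg (by omega)]
  have hcons : ∀ α, α < q → (pp α, pp (α + 1)) ∈ s := by
    intro α hα
    rcases Nat.lt_or_ge α kb with h | h
    · rw [hppb α (by omega), hppb (α + 1) (by omega)]
      have : kb - α = (kb - (α + 1)) + 1 := by omega
      rw [this]
      exact hbpair _ (by omega)
    · rw [hppf α h, hppf (α + 1) (by omega)]
      have : α + 1 - kb = (α - kb) + 1 := by omega
      rw [this]
      exact hfpair _ (by omega)
  have hp0 : pp 0 ∉ pran s := by
    rw [hppb 0 (by omega)]
    simpa using hkb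
  have hpq : pp q ∉ pdom s := by
    rw [hppf q (by omega)]
    have : q - kb = kf := by omega
    rw [this]
    exact hkf
  have hinj : ∀ α β, α ≤ q → β ≤ q → pp α = pp β → α = β := by
    intro α β hα hβ heq
    by_contra hne
    wlog hlt : α < β generalizing α β
    · exact this β α hβ hα heq.symm (Ne.symm hne) (by omega)
    have finj : ∀ i i', i' < i → i ≤ kf → F^[i] m ≠ F^[i'] m := by
      intro i i' hii hikf heq2
      have h1 : F^[kf - i + i] m = F^[kf - i + i'] m := by
        rw [Function.iterate_add_apply, Function.iterate_add_apply, heq2]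
      have h2 : kf - i + i = kf := by omega
      rw [h2] at h1
      have h3 : F^[kf - i + i'] m ∈ pdom s := hflt _ (by omega)
      rw [← h1] at h3
      exact hkf h3
    have binj : ∀ i i', i' < i → i ≤ kb → B^[i] m ≠ B^[i'] m := by
      intro i i' hii hikb heq2
      have h1 : B^[kb - i + i] m = B^[kb - i + i'] m := by
        rw [Function.iterate_add_apply, Function.iterate_add_apply, heq2]
      have h2 : kb - i + i = kb := by omega
      rw [h2] at h1
      have h3 : B^[kb - i + i'] m ∈ pran s := hblt _ (by omega)
      rw [← h1] at h3
      exact hkb h3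
    rcases le_or_gt β kb with hbkb | hbkb
    · exact binj (kb - α) (kb - β) (by omega) (by omega)
        (by rw [← hppb α (by omega), ← hppb β hbkb, heq])
    rcases Nat.lt_or_ge α kb with hakb | hakb
    · have hmix : B^[kb - α] m = F^[β - kb] m := by
        rw [← hppb α (by omega), ← hppf β (by omega), heq]
      set d := β - kb with hd
      have hd1 : 1 ≤ d := by omega
      have hdkf : d ≤ kf := by omega
      have hm0 : m = F^[(kb - α) + d] m := by
        have := cancel (kb - α) (by omega)
        rw [hmix] at this
        rw [← Function.iterate_add_apply] at this
        exact this.symm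
      set Pp := (kb - α) + d with hPp
      have hPp1 : 1 ≤ Pp := by omega
      rcases le_or_gt kf Pp with hc | hc
      · have h1 : F^[Pp] m = F^[kf] m := freeze Pp hc
        have hkf1 : 1 ≤ kf := by omega
        have : m ∈ pdom s := hflt 0 (by omega)
        rw [hm0, h1] at this
        exact hkf this
      · have hper : ∀ j, F^[j * Pp] m = m := by
          intro j
          induction j with
          | zero => simp
          | succ j ih =>
            have : (j + 1) * Pp = Pp + j * Pp := by ring
            rw [this, Function.iterate_add_apply, ih, ← hm0]
        have h1 : F^[kf] m = F^[kf % Pp] m := by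
          conv_lhs => rw [← Nat.mod_add_div kf Pp]
          rw [Function.iterate_add_apply, Nat.mul_comm Pp (kf / Pp), hper (kf / Pp)]
        have h2 : F^[kf % Pp] m ∈ pdom s := hflt _ (by
          have := Nat.mod_lt kf (show 0 < Pp by omega)
          omega)
        rw [← h1] at h2
        exact hkf h2
    · exact finj (β - kb) (α - kb) (by omega) (by omega)
        (by rw [← hppf β (by omega), ← hppf α hakb, heq])
  have horb : relOrbit (sRel s) m = pp '' Set.Iic q := by
    apply Set.Subset.antisymm
    · apply relOrbit_subset
      · exact ⟨kb, by simp only [Set.mem_Iic]; omega, hppkb⟩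
      · intro a b hab
        constructor
        · rintro ⟨α, hα, rfl⟩
          simp only [Set.mem_Iic] at hα
          rcases Nat.eq_or_lt_of_le hα with heq | hα'
          · have hpq' := hpq
            rw [← heq] at hpq'
            exact absurd ⟨(pp α, b), hab, rfl⟩ hpq'
          · have h1 : b = pp (α + 1) := hs.1 hab (hcons α hα')
            exact ⟨α + 1, by simp only [Set.mem_Iic]; omega, h1.symm⟩
        · rintro ⟨β, hβ, rfl⟩
          simp only [Set.mem_Iic] at hβ
          rcases Nat.eq_zero_or_pos β with rfl | hβ'
          · exact absurd ⟨(a, pp 0), hab, rfl⟩ hp0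
          · have hc := hcons (β - 1) (by omega)
            have hc' : (pp (β - 1), pp β) ∈ s := by
              have : β - 1 + 1 = β := by omega
              rwa [this] at hc
            have h1 : a = pp (β - 1) := hs.2 hab hc'
            exact ⟨β - 1, by simp only [Set.mem_Iic]; omega, h1.symm⟩
    · rintro x ⟨α, hα, rfl⟩
      simp only [Set.mem_Iic] at hα
      rw [relOrbit_eq_reach]
      simp only [Set.mem_setOf_eq]
      rcases le_or_gt α kb with h | h
      · rw [hppb α h]
        have : ∀ l, l ≤ kb → Reach (sRel s) m (B^[l] m) := by
          intro l
          induction l with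
          | zero => intro _; exact Reach.refl m
          | succ l ih =>
            intro hl
            exact Reach.bwd (ih (by omega)) (hbpair l (by omega))
        exact this _ (by omega)
      · rw [hppf α (by omega)]
        have : ∀ l, l ≤ kf → Reach (sRel s) m (F^[l] m) := by
          intro l
          induction l with
          | zero => intro _; exact Reach.refl m
          | succ l ih =>
            intro hl
            exact Reach.fwd (ih (by omega)) (hfpair l (by omega))
        exact this _ (by omega)
  exact ⟨q, pp, ⟨kb, by omega, hppkb⟩, hcons, hp0, hpq, hinj, horb⟩

/- ===== Part 5: the extension by a fresh chain, and the no-new-fixed-points lemma ===== -/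

/-- the set of fresh points -/
def FsetOf (f : ℕ → ℕ) (j : ℕ) : Set ℕ := {x | ∃ i, 1 ≤ i ∧ i ≤ j ∧ x = f i}

/-- the new pairs closing the path `p 0 … p q` into a cycle through
`f 1, …, f j` -/
def newpOf (p f : ℕ → ℕ) (q j : ℕ) : Set (ℕ × ℕ) :=
  {z | z = (p q, f 1) ∨ (∃ i, 1 ≤ i ∧ i < j ∧ z = (f i, f (i + 1))) ∨ z = (f j, p 0)}

/-- admissible adjacency of letters in (suffixes of) nice words: no two adjacent
group letters, no adjacent `x`-letters of opposite signs -/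
def LetterOK : Letter → Letter → Prop
  | Sum.inl _, Sum.inl _ => False
  | Sum.inr σ, Sum.inr τ => σ = τ
  | _, _ => True

/-- all group letters of `v` belong to `GS` -/
def GoodW (GS : Set Perm') (v : Word) : Prop := ∀ g : Perm', Sum.inl g ∈ v → g ∈ GS

/-- The hypotheses on the extension data. -/
structure ZExt (s : Set (ℕ × ℕ)) (p f : ℕ → ℕ) (q j : ℕ) (D' : Set ℕ)
    (GS : Set Perm') : Prop where
  hs : PartInj s
  jpos : 1 ≤ j
  hdom : pdom s ⊆ D'
  hran : pran s ⊆ D'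
  hPD : ∀ α, α ≤ q → p α ∈ D'
  hFD : ∀ i, 1 ≤ i → i ≤ j → f i ∉ D'
  hfinj : ∀ i i', 1 ≤ i → i ≤ j → 1 ≤ i' → i' ≤ j → f i = f i' → i = i'
  hpqdom : p q ∉ pdom s
  hp0ran : p 0 ∉ pran s
  hGoodD : ∀ g ∈ GS, ∀ i, 1 ≤ i → i ≤ j → g (f i) ∉ D'
  hGoodF : ∀ g ∈ GS, ∀ i, 1 ≤ i → i ≤ j → ∀ i', 1 ≤ i' → i' ≤ j → g (f i) ≠ f i'
  hGinv : ∀ g ∈ GS, g⁻¹ ∈ GS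

namespace ZExt

variable {s : Set (ℕ × ℕ)} {p f : ℕ → ℕ} {q j : ℕ} {D' : Set ℕ} {GS : Set Perm'}

lemma fset_not_D (hE : ZExt s p f q j D' GS) {x : ℕ} (hx : x ∈ FsetOf f j) :
    x ∉ D' := by
  rcases hx with ⟨i, h1, h2, rfl⟩
  exact hE.hFD i h1 h2

lemma mem_fset (hE : ZExt s p f q j D' GS) {i : ℕ} (h1 : 1 ≤ i) (h2 : i ≤ j) :
    f i ∈ FsetOf f j := ⟨i, h1, h2, rfl⟩

lemma goodG_not_fset (hE : ZExt s p f q j D' GS) {g : Perm'} (hg : g ∈ GS) {i : ℕ}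
    (h1 : 1 ≤ i) (h2 : i ≤ j) : g (f i) ∉ FsetOf f j := by
  rintro ⟨i', hi1, hi2, hx⟩
  exact hE.hGoodF g hg i h1 h2 i' hi1 hi2 hx

/-- if `g c ∈ F` for `c ∈ D'` and `g ∈ GS`, contradiction -/
lemma goodG_img_not_fset (hE : ZExt s p f q j D' GS) {g : Perm'} (hg : g ∈ GS) {c : ℕ}
    (hc : c ∈ D') : g c ∉ FsetOf f j := by
  rintro ⟨i, h1, h2, hgc⟩
  have : c = g⁻¹ (f i) := by
    have := congrArg (⇑g⁻¹) hgc
    simpa using this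
  rw [this] at hc
  exact hE.hGoodD g⁻¹ (hE.hGinv g hg) i h1 h2 hc

lemma pdom_newp (hE : ZExt s p f q j D' GS) {x : ℕ} (hx : x ∈ pdom (newpOf p f q j)) :
    x = p q ∨ x ∈ FsetOf f j := by
  rcases hx with ⟨⟨a, b⟩, hab, rfl⟩
  rcases hab with h | ⟨i, h1, h2, h⟩ | h
  · rw [h]; exact Or.inl rfl
  · rw [h]; exact Or.inr ⟨i, h1, by omega, rfl⟩
  · rw [h]; exact Or.inr ⟨j, hE.jpos, le_refl j, rfl⟩

lemma pran_newp (hE : ZExt s p f q j D' GS) {x : ℕ} (hx : x ∈ pran (newpOf p f q j)) :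
    x = p 0 ∨ x ∈ FsetOf f j := by
  rcases hx with ⟨⟨a, b⟩, hab, rfl⟩
  rcases hab with h | ⟨i, h1, h2, h⟩ | h
  · rw [h]; exact Or.inr ⟨1, le_refl 1, hE.jpos, rfl⟩
  · rw [h]; exact Or.inr ⟨i + 1, by omega, by omega, rfl⟩
  · rw [h]; exact Or.inl rfl

lemma pdom_t (hE : ZExt s p f q j D' GS) {x : ℕ}
    (hx : x ∈ pdom (s ∪ newpOf p f q j)) : x ∈ D' ∨ x ∈ FsetOf f j := by
  rcases hx with ⟨⟨a, b⟩, hab, rfl⟩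
  rcases hab with h | h
  · exact Or.inl (hE.hdom ⟨(a, b), h, rfl⟩)
  · rcases hE.pdom_newp ⟨(a, b), h, rfl⟩ with h' | h'
    · rw [h']; exact Or.inl (hE.hPD q (le_refl q))
    · exact Or.inr h'

lemma pran_t (hE : ZExt s p f q j D' GS) {x : ℕ}
    (hx : x ∈ pran (s ∪ newpOf p f q j)) : x ∈ D' ∨ x ∈ FsetOf f j := by
  rcases hx with ⟨⟨a, b⟩, hab, rfl⟩
  rcases hab with h | h
  · exact Or.inl (hE.hran ⟨(a, b), h, rfl⟩)
  · rcases hE.pran_newp ⟨(a, b), h, rfl⟩ with h' | h'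
    · rw [h']; exact Or.inl (hE.hPD 0 (by omega))
    · exact Or.inr h'

/-- where can a plain `s`-path from a point of `D'` end? -/
lemma auxEnd (hE : ZExt s p f q j D' GS) :
    ∀ v : Word, List.Chain' LetterOK v → ∀ n c, n ∈ D' → wordRel s v n c →
      c ∈ D' ∨ ∃ g c', v.head? = some (Sum.inl g) ∧ c = g c' ∧ c' ∈ D' := by
  intro v
  induction v with
  | nil =>
    intro _ n c hn h
    cases h
    exact Or.inl hn
  | cons l v ih =>
    rintro hch n c hn ⟨c', h1, h2⟩
    have hch' : List.Chain' LetterOK v := hch.tail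
    rcases l with g | b
    · -- group letter
      have hc' : c' ∈ D' := by
        rcases ih hch' n c' hn h1 with h | ⟨g', c'', hh, _, _⟩
        · exact h
        · exfalso
          have := (List.isChain_cons.mp hch).1 _ hh
          exact this
      exact Or.inr ⟨g, c', rfl, h2.symm, hc'⟩
    · cases b
      · exact Or.inl (hE.hdom ⟨(c, c'), h2, rfl⟩)
      · exact Or.inl (hE.hran ⟨(c', c), h2, rfl⟩)

end ZExt

lemma head?_replicate_append {α : Type*} (a : α) {i : ℕ} (hi : 1 ≤ i) (v : List α) :
    (List.replicate i a ++ v).head? = some a := by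
  cases i with
  | zero => omega
  | succ i => simp [List.replicate_succ]

lemma countP_replicate_letter (b : Bool) (n : ℕ) :
    (List.replicate n (Sum.inr b : Letter)).countP (fun l => l.isRight) = n := by
  induction n with
  | zero => rfl
  | succ n ih => simp [List.replicate_succ, List.countP_cons, ih]

namespace ZExt

variable {s : Set (ℕ × ℕ)} {p f : ℕ → ℕ} {q j : ℕ} {D' : Set ℕ} {GS : Set Perm'}

/-- The main lemma: a `t`-path starting in `D'` either is an `s`-path, or has
entered the fresh chain (in one of the two possible ways), or has just died by
applying a group letter at a fresh point. -/
theorem mainLemma (hE : ZExt s p f q j D' GS) :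
    ∀ v : Word, List.Chain' LetterOK v → GoodW GS v →
      v.countP (fun l => l.isRight) ≤ j →
      ∀ n b, n ∈ D' → wordRel (s ∪ newpOf p f q j) v n b →
        wordRel s v n b ∨
        (∃ i, 1 ≤ i ∧ i ≤ j ∧ b = f i ∧
          ((∃ v', v = List.replicate i (Sum.inr true) ++ v' ∧ wordRel s v' n (p q)) ∨
           (∃ v', v = List.replicate (j + 1 - i) (Sum.inr false) ++ v' ∧
             wordRel s v' n (p 0)))) ∨
        (b ∉ D' ∧ b ∉ FsetOf f j ∧ ∃ g v', v = Sum.inl g :: v') := by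
  intro v
  induction v with
  | nil =>
    intro _ _ _ n b hn h
    cases h
    exact Or.inl rfl
  | cons l v ih =>
    rintro hch hgw hcnt n b hn ⟨c, h1, h2⟩
    have hch' : List.Chain' LetterOK v := hch.tail
    have hgw' : GoodW GS v := fun g hg => hgw g (List.mem_cons_of_mem _ hg)
    have hcnt' : v.countP (fun l => l.isRight) ≤ j := by
      have := List.countP_cons (p := fun l : Letter => l.isRight) (a := l) (l := v)
      omega
    have hheadOK := (List.isChain_cons.mp hch).1
    rcases ih hch' hgw' hcnt' n c hn h1 with hL | ⟨i, hi1, hi2, rfl, hbr⟩ | ⟨hd1, hd2, g', v', rfl⟩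
    · -- previous path is an s-path
      have hcfacts := hE.auxEnd v hch' n c hn hL
      have hcnF : c ∉ FsetOf f j := by
        rcases hcfacts with h | ⟨g, c', hh, rfl, hc'⟩
        · exact fun hc => hE.fset_not_D hc h
        · exact hE.goodG_img_not_fset (hgw g (List.mem_cons_of_mem _ (List.mem_of_mem_head? (by rw [hh]; exact rfl)))) hc'
      rcases l with g | bb
      · -- group letter applied
        have hcD : c ∈ D' := by
          rcases hcfacts with h | ⟨g', c', hh, _, _⟩
          · exact h
          · exact absurd (hheadOK _ hh) (by intro hOK; exact hOK)
        exact Or.inl ⟨c, hL, h2⟩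
      · cases bb
        case false =>
          -- x⁻¹ : (b, c) ∈ t
          rcases h2 with h2 | h2
          · exact Or.inl ⟨c, hL, h2⟩
          · rcases h2 with h | ⟨i, hi1, hi2, h⟩ | h
            · -- (pq, f1) : c = f 1 ∈ F, contradiction
              exfalso
              apply hcnF
              rw [Prod.mk.injEq] at h
              rw [h.2]
              exact hE.mem_fset (le_refl 1) hE.jpos
            · exfalso
              apply hcnF
              rw [Prod.mk.injEq] at h
              rw [h.2]
              exact hE.mem_fset (by omega) (by omega)
            · -- (f j, p 0) : b = f j, c = p 0 :  entering backwards
              rw [Prod.mk.injEq] at h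
              refine Or.inr (Or.inl ⟨j, hE.jpos, le_refl j, h.1, Or.inr ⟨v, ?_, ?_⟩⟩)
              · have : j + 1 - j = 1 := by omega
                rw [this]
                rfl
              · rw [← h.2]; exact hL
        case true =>
          -- x : (c, b) ∈ t
          rcases h2 with h2 | h2
          · exact Or.inl ⟨c, hL, h2⟩
          · rcases h2 with h | ⟨i, hi1, hi2, h⟩ | h
            · -- (pq, f1) : entering forwards
              rw [Prod.mk.injEq] at h
              refine Or.inr (Or.inl ⟨1, le_refl 1, hE.jpos, h.2, Or.inl ⟨v, rfl, ?_⟩⟩)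
              rw [← h.1]; exact hL
            · exfalso
              apply hcnF
              rw [Prod.mk.injEq] at h
              rw [h.1]
              exact hE.mem_fset hi1 (by omega)
            · exfalso
              apply hcnF
              rw [Prod.mk.injEq] at h
              rw [h.1]
              exact hE.mem_fset hE.jpos (le_refl j)
    · -- path has entered the fresh chain, currently at f i
      rcases l with g | bb
      · -- group letter at a fresh point: dead
        have hg : g ∈ GS := hgw g (List.mem_cons_self)
        have hb : b = g (f i) := h2.symm
        refine Or.inr (Or.inr ⟨?_, ?_, g, v, rfl⟩)
        · rw [hb]; exact hE.hGoodD g hg i hi1 hi2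
        · rw [hb]; exact hE.goodG_not_fset hg hi1 hi2
      · cases bb
        case false =>
          -- x⁻¹ at f i : (b, f i) ∈ t
          rcases hbr with ⟨v', hveq, hvrel⟩ | ⟨v', hveq, hvrel⟩
          · -- positive entry: head of v is inr true, contradiction with chain
            exfalso
            have hh : v.head? = some (Sum.inr true) := by
              rw [hveq]; exact head?_replicate_append _ hi1 _
            exact absurd (hheadOK _ hh) (by intro hOK; exact Bool.false_ne_true (by exact hOK))
          · -- negative entry: move one more step backwards
            rcases h2 with h2 | h2
            · exact absurd (hE.hran ⟨(b, f i), h2, rfl⟩) (hE.hFD i hi1 hi2)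
            · rcases h2 with h | ⟨i', hi1', hi2', h⟩ | h
              · -- (p q, f 1) : f i = f 1, b = p q : exit backwards, count contradiction
                exfalso
                rw [Prod.mk.injEq] at h
                have hieq : i = 1 := hE.hfinj i 1 hi1 hi2 (le_refl 1) hE.jpos h.2
                have : (Sum.inr false :: v).countP (fun l : Letter => l.isRight) ≥ j + 1 := by
                  rw [hveq, hieq]
                  have h1' : j + 1 - 1 = j := by omega
                  rw [h1']
                  rw [List.countP_cons, List.countP_append, countP_replicate_letter]
                  simp [Sum.isRight]
                omega
              · -- (f i', f (i'+1)) : i = i' + 1, b = f i'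
                rw [Prod.mk.injEq] at h
                have hieq : i = i' + 1 :=
                  hE.hfinj i (i' + 1) hi1 hi2 (by omega) (by omega) h.2
                refine Or.inr (Or.inl ⟨i', hi1', by omega, h.1, Or.inr ⟨v', ?_, hvrel⟩⟩)
                have harith : j + 1 - i' = (j + 1 - i) + 1 := by omega
                rw [harith, List.replicate_succ, hveq]
                rfl
              · -- (f j, p 0) : f i = p 0 ∈ D', contradiction
                exfalso
                rw [Prod.mk.injEq] at h
                exact hE.hFD i hi1 hi2 (h.2 ▸ hE.hPD 0 (by omega))
        case true =>
          -- x at f i : (f i, b) ∈ t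
          rcases hbr with ⟨v', hveq, hvrel⟩ | ⟨v', hveq, hvrel⟩
          · -- positive entry: move one more step forwards
            rcases h2 with h2 | h2
            · exact absurd (hE.hdom ⟨(f i, b), h2, rfl⟩) (hE.hFD i hi1 hi2)
            · rcases h2 with h | ⟨i', hi1', hi2', h⟩ | h
              · -- (p q, f 1) : f i = p q ∈ D', contradiction
                exfalso
                rw [Prod.mk.injEq] at h
                exact hE.hFD i hi1 hi2 (h.1 ▸ hE.hPD q (le_refl q))
              · -- f i = f i', b = f (i'+1)
                rw [Prod.mk.injEq] at h
                have hieq : i = i' := hE.hfinj i i' hi1 hi2 hi1' (by omega) h.1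
                refine Or.inr (Or.inl ⟨i' + 1, by omega, by omega, h.2, Or.inl ⟨v', ?_, hvrel⟩⟩)
                rw [List.replicate_succ, hveq, hieq]
                rfl
              · -- (f j, p 0) : f i = f j, b = p 0 : exit forwards, count contradiction
                exfalso
                rw [Prod.mk.injEq] at h
                have hieq : i = j := hE.hfinj i j hi1 hi2 hE.jpos (le_refl j) h.1
                have : (Sum.inr true :: v).countP (fun l : Letter => l.isRight) ≥ j + 1 := by
                  rw [hveq, hieq]
                  rw [List.countP_cons, List.countP_append, countP_replicate_letter]
                  simp [Sum.isRight]
                omega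
          · -- negative entry, now a positive x: chain contradiction
            exfalso
            have hh : v.head? = some (Sum.inr false) := by
              rw [hveq]; exact head?_replicate_append _ (by omega) _
            exact absurd (hheadOK _ hh) (by intro hOK; exact Bool.false_ne_true (by exact hOK.symm))
    · -- dead point
      exfalso
      rcases l with g | bb
      · exact (hheadOK _ rfl : LetterOK (Sum.inl g) (Sum.inl g'))
      · cases bb
        · -- x⁻¹ : c ∈ pran t
          rcases hE.pran_t ⟨(b, c), h2, rfl⟩ with h | h
          · exact hd1 h
          · exact hd2 h
        · rcases hE.pdom_t ⟨(c, b), h2, rfl⟩ with h | h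
          · exact hd1 h
          · exact hd2 h

end ZExt

namespace ZExt

variable {s : Set (ℕ × ℕ)} {p f : ℕ → ℕ} {q j : ℕ} {D' : Set ℕ} {GS : Set Perm'}

/-- paths starting at a fresh point `f i` -/
theorem fstartLemma (hE : ZExt s p f q j D' GS) :
    ∀ v : Word, List.Chain' LetterOK v → GoodW GS v →
      (v = [] ∨ v.getLast? = some (Sum.inr true)) →
      ∀ i b, 1 ≤ i → i ≤ j → wordRel (s ∪ newpOf p f q j) v (f i) b →
        (∃ m, i + m ≤ j ∧ v = List.replicate m (Sum.inr true) ∧ b = f (i + m)) ∨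
        (∃ v', v = v' ++ List.replicate (j - i + 1) (Sum.inr true) ∧
          wordRel (s ∪ newpOf p f q j) v' (p 0) b) ∨
        (b ∉ D' ∧ b ∉ FsetOf f j ∧ ∃ g v', v = Sum.inl g :: v') := by
  intro v
  induction v with
  | nil =>
    intro _ _ _ i b hi1 hi2 h
    cases h
    exact Or.inl ⟨0, by omega, rfl, by rw [Nat.add_zero]⟩
  | cons l v ih =>
    rintro hch hgw hlast i b hi1 hi2 ⟨c, h1, h2⟩
    have hch' : List.Chain' LetterOK v := hch.tail
    have hgw' : GoodW GS v := fun g hg => hgw g (List.mem_cons_of_mem _ hg)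
    have hlast' : v = [] ∨ v.getLast? = some (Sum.inr true) := by
      rcases hlast with h | h
      · exact absurd h (List.cons_ne_nil _ _)
      · cases v with
        | nil => exact Or.inl rfl
        | cons l' v' =>
          right
          rwa [List.getLast?_cons_cons] at h
    have hheadOK := (List.isChain_cons.mp hch).1
    rcases ih hch' hgw' hlast' i c hi1 hi2 h1 with ⟨m, hm1, hveq, rfl⟩ | ⟨v', hveq, hvrel⟩ | ⟨hd1, hd2, g', v', rfl⟩
    · -- still inside the chain at f (i+m)
      rcases l with g | bb
      · -- group letter: dead (or contradiction with last letter when v = [])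
        cases v with
        | nil =>
          exfalso
          rcases hlast with h | h
          · exact List.cons_ne_nil _ _ h
          · simp only [List.getLast?_singleton, Option.some.injEq] at h
            exact (Sum.inl_ne_inr h)
        | cons l' v' =>
          have hg : g ∈ GS := hgw g (List.mem_cons_self)
          have hb : b = g (f (i + m)) := h2.symm
          refine Or.inr (Or.inr ⟨?_, ?_, g, _, rfl⟩)
          · rw [hb]; exact hE.hGoodD g hg (i + m) (by omega) hm1
          · rw [hb]; exact hE.goodG_not_fset hg (by omega) hm1
      · cases bb
        case false =>
          -- x⁻¹
          exfalso
          cases v with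
          | nil =>
            rcases hlast with h | h
            · exact List.cons_ne_nil _ _ h
            · simp only [List.getLast?_singleton, Option.some.injEq, Sum.inr.injEq] at h
              exact Bool.false_ne_true h
          | cons l' v'' =>
            have hm1' : 1 ≤ m := by
              by_contra hm
              have : m = 0 := by omega
              rw [this] at hveq
              simp at hveq
            have hh : (l' :: v'').head? = some (Sum.inr true) := by
              rw [hveq]
              cases m with
              | zero => omega
              | succ m => simp [List.replicate_succ]
            exact absurd (hheadOK _ hh)
              (by intro hOK; exact Bool.false_ne_true hOK)
        case true =>
          -- x : move forwards
          rcases h2 with h2 | h2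
          · exact absurd (hE.hdom ⟨(f (i + m), b), h2, rfl⟩)
              (hE.hFD (i + m) (by omega) hm1)
          · rcases h2 with h | ⟨i', hi1', hi2', h⟩ | h
            · exfalso
              rw [Prod.mk.injEq] at h
              exact hE.hFD (i + m) (by omega) hm1 (h.1 ▸ hE.hPD q (le_refl q))
            · rw [Prod.mk.injEq] at h
              have hieq : i + m = i' :=
                hE.hfinj (i + m) i' (by omega) hm1 hi1' (by omega) h.1
              refine Or.inl ⟨m + 1, by omega, ?_, ?_⟩
              · rw [List.replicate_succ, hveq]
              · rw [h.2, ← hieq]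
                exact rfl
            · rw [Prod.mk.injEq] at h
              have hieq : i + m = j :=
                hE.hfinj (i + m) j (by omega) hm1 hE.jpos (le_refl j) h.1
              refine Or.inr (Or.inl ⟨[], ?_, ?_⟩)
              · rw [List.nil_append, hveq]
                have : j - i + 1 = m + 1 := by omega
                rw [this, List.replicate_succ]
              · cases h.2
                exact rfl
    · -- already exited at p 0
      refine Or.inr (Or.inl ⟨l :: v', ?_, ⟨c, hvrel, h2⟩⟩)
      rw [hveq, List.cons_append]
    · -- dead
      exfalso
      rcases l with g | bb
      · exact (hheadOK _ rfl : LetterOK (Sum.inl g) (Sum.inl g'))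
      · cases bb
        case false =>
          rcases hE.pran_t ⟨(b, c), h2, rfl⟩ with h | h
          · exact hd1 h
          · exact hd2 h
        case true =>
          rcases hE.pdom_t ⟨(c, b), h2, rfl⟩ with h | h
          · exact hd1 h
          · exact hd2 h

end ZExt

/- ===== Part 6: structure of nice words ===== -/

lemma xpow_natCast (k : ℕ) : xpow (k : ℤ) = List.replicate k (Sum.inr true) := by
  simp [xpow]

lemma xpow_struct (k : ℤ) (hk : k ≠ 0) :
    ∃ n : ℕ, ∃ σ : Bool, 1 ≤ n ∧ xpow k = List.replicate n (Sum.inr σ) ∧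
      (0 < k → σ = true) := by
  rcases le_or_gt 0 k with h | h
  · exact ⟨k.toNat, true, by omega, by rw [xpow, if_pos h], fun _ => rfl⟩
  · exact ⟨(-k).toNat, false, by omega, by rw [xpow, if_neg (by omega)], fun h' => by omega⟩

lemma chain'_replicate_letter (n : ℕ) (σ : Bool) :
    List.Chain' LetterOK (List.replicate n (Sum.inr σ : Letter)) :=
  List.isChain_replicate_of_rel n rfl

lemma blockWord_chain {g : Perm'} {k : ℤ} (hk : k ≠ 0) :
    List.Chain' LetterOK (blockWord (g, k)) := by
  obtain ⟨n, σ, hn, heq, -⟩ := xpow_struct k hk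
  show List.Chain' LetterOK (Sum.inl g :: xpow k)
  rw [heq]
  apply List.isChain_cons.mpr
  refine ⟨?_, chain'_replicate_letter n σ⟩
  intro y hy
  rw [show List.replicate n (Sum.inr σ : Letter) = List.replicate n (Sum.inr σ) ++ []
    from (List.append_nil _).symm, head?_replicate_append _ hn []] at hy
  cases hy
  exact trivial

lemma replicate_last (n : ℕ) (hn : 1 ≤ n) (a : Letter) :
    (List.replicate n a).getLast? = some a := by
  cases n with
  | zero => omega
  | succ n => rw [List.replicate_succ', List.getLast?_concat]

lemma blockWord_last' {g : Perm'} {k : ℤ} (hk : k ≠ 0) :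
    ∃ σ, (blockWord (g, k)).getLast? = some (Sum.inr σ) := by
  obtain ⟨n, σ, hn, heq, -⟩ := xpow_struct k hk
  refine ⟨σ, ?_⟩
  show (Sum.inl g :: xpow k).getLast? = _
  rw [heq]
  cases n with
  | zero => omega
  | succ n =>
    rw [List.replicate_succ', ← List.cons_append, List.getLast?_concat]

lemma blockWord_last {g : Perm'} {k : ℤ} (hk : 0 < k) :
    (blockWord (g, k)).getLast? = some (Sum.inr true) := by
  obtain ⟨n, σ, hn, heq, hσ⟩ := xpow_struct k (by omega)
  show (Sum.inl g :: xpow k).getLast? = _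
  rw [heq, hσ hk]
  cases n with
  | zero => omega
  | succ n =>
    rw [List.replicate_succ', ← List.cons_append, List.getLast?_concat]

lemma flatten_chain : ∀ bs : List (Perm' × ℤ), (∀ p ∈ bs, p.2 ≠ 0) →
    List.Chain' LetterOK ((bs.map blockWord).flatten) ∧
      (bs ≠ [] → ∃ g r, ((bs.map blockWord).flatten) = Sum.inl g :: r) := by
  intro bs
  induction bs with
  | nil => exact fun _ => ⟨List.isChain_nil, fun h => absurd rfl h⟩
  | cons b rest ih =>
    intro hall
    obtain ⟨g, k⟩ := b
    have hb2 : k ≠ 0 := hall (g, k) (List.mem_cons_self)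
    have hrest := ih (fun p hp => hall p (List.mem_cons_of_mem _ hp))
    constructor
    · rw [List.map_cons, List.flatten_cons]; show List.IsChain _ _; rw [List.isChain_append]
      refine ⟨blockWord_chain hb2, hrest.1, ?_⟩
      intro x hx y hy
      cases rest with
      | nil => simp at hy
      | cons b' rest' =>
        obtain ⟨g', r, heq⟩ := hrest.2 (List.cons_ne_nil _ _)
        rw [heq, List.head?_cons] at hy
        cases hy
        obtain ⟨σ, hσ⟩ := blockWord_last' (g := g) hb2
        rw [hσ] at hx
        cases hx
        exact trivial
    · intro _
      exact ⟨g, xpow k ++ (rest.map blockWord).flatten,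
        by rw [List.map_cons, List.flatten_cons]; rfl⟩

lemma flatten_last : ∀ bs : List (Perm' × ℤ), ∀ pl : Perm' × ℤ,
    bs.getLast? = some pl → 0 < pl.2 →
    ((bs.map blockWord).flatten).getLast? = some (Sum.inr true) := by
  intro bs
  induction bs with
  | nil => intro pl h; simp at h
  | cons b rest ih =>
    intro pl hlast hpos
    cases rest with
    | nil =>
      simp only [List.getLast?_singleton, Option.some.injEq] at hlast
      subst hlast
      rw [List.map_cons, List.map_nil, List.flatten_cons, List.flatten_nil, List.append_nil]
      obtain ⟨g, k⟩ := b
      exact blockWord_last hpos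
    | cons b' rest' =>
      rw [List.getLast?_cons_cons] at hlast
      have := ih pl hlast hpos
      rw [List.map_cons, List.flatten_cons, List.getLast?_append, this]
      rfl

lemma nice_chain {G : Subgroup Perm'} {w : Word} (hw : IsNice G w) :
    List.Chain' LetterOK w := by
  rcases hw with ⟨k, hk, rfl⟩ | ⟨bs, hne, hall, _, rfl⟩
  · rw [xpow_natCast]
    exact chain'_replicate_letter k true
  · exact (flatten_chain bs (fun p hp => (hall p hp).2.2)).1

lemma nice_last {G : Subgroup Perm'} {w : Word} (hw : IsNice G w) :
    w.getLast? = some (Sum.inr true) := by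
  rcases hw with ⟨k, hk, rfl⟩ | ⟨bs, hne, hall, hex, rfl⟩
  · rw [xpow_natCast]
    exact replicate_last k (by omega) _
  · obtain ⟨pl, hpl, hpos⟩ := hex
    exact flatten_last bs pl hpl hpos

lemma nice_letters {G : Subgroup Perm'} {w : Word} (hw : IsNice G w) :
    ∀ g : Perm', Sum.inl g ∈ w → g ∈ G ∧ g ≠ 1 := by
  intro g hg
  rcases hw with ⟨k, hk, rfl⟩ | ⟨bs, hne, hall, _, rfl⟩
  · exfalso
    rw [xpow_natCast] at hg
    exact absurd (List.eq_of_mem_replicate hg) (by simp)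
  · rw [List.mem_flatten] at hg
    obtain ⟨l, hl, hgl⟩ := hg
    rw [List.mem_map] at hl
    obtain ⟨b, hb, rfl⟩ := hl
    have hb' := hall b hb
    rw [show blockWord b = Sum.inl b.1 :: xpow b.2 from rfl, List.mem_cons] at hgl
    rcases hgl with h | h
    · cases h
      exact ⟨hb'.1, hb'.2.1⟩
    · exfalso
      obtain ⟨n, σ, hn, heq, -⟩ := xpow_struct b.2 hb'.2.2
      rw [show xpow b.2 = List.replicate n (Sum.inr σ) from heq] at h
      exact absurd (List.eq_of_mem_replicate h) (by simp)

lemma nice_shape {G : Subgroup Perm'} {w : Word} (hw : IsNice G w) :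
    (∃ k, 0 < k ∧ w = List.replicate k (Sum.inr true)) ∨
    (∃ g w₁ σ, w = Sum.inl g :: w₁ ∧ w₁.head? = some (Sum.inr σ)) := by
  rcases hw with ⟨k, hk, rfl⟩ | ⟨bs, hne, hall, _, rfl⟩
  · exact Or.inl ⟨k, hk, xpow_natCast k⟩
  · right
    cases bs with
    | nil => exact absurd rfl hne
    | cons b rest =>
      obtain ⟨g, k⟩ := b
      have hk : k ≠ 0 := (hall (g, k) (List.mem_cons_self)).2.2
      obtain ⟨n, σ, hn, heq, -⟩ := xpow_struct k hk
      refine ⟨g, xpow k ++ (rest.map blockWord).flatten, σ, ?_, ?_⟩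
      · rw [List.map_cons, List.flatten_cons]; rfl
      · rw [heq]
        exact head?_replicate_append _ hn _

namespace ZExt

variable {s : Set (ℕ × ℕ)} {p f : ℕ → ℕ} {q j : ℕ} {D' : Set ℕ} {GS : Set Perm'}

theorem fixEq (hE : ZExt s p f q j D' GS) (G : Subgroup Perm') {w : Word}
    (hw : IsNice G w) (hgw : GoodW GS w)
    (hcnt : w.countP (fun l => l.isRight) ≤ j) :
    wordFix (s ∪ newpOf p f q j) w = wordFix s w := by
  apply Set.Subset.antisymm
  · intro n hn
    have hch := nice_chain hw
    have hlast := nice_last hw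
    have hstart : n ∈ pdom (s ∪ newpOf p f q j) :=
      wordRel_start_dom _ w n n hn hlast
    rcases nice_shape hw with ⟨k, hk, hweq⟩ | ⟨g, w₁, σ, hweq, hw₁⟩
    · -- pure power
      rcases hE.pdom_t hstart with hD | hF
      · rcases hE.mainLemma w hch hgw hcnt n n hD hn with hL | ⟨i, hi1, hi2, heq, -⟩ | ⟨hd, -, -⟩
        · exact hL
        · exact absurd hD (heq ▸ hE.hFD i hi1 hi2)
        · exact absurd hD hd
      · exfalso
        obtain ⟨i, hi1, hi2, rfl⟩ := hF
        subst hweq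
        have hcnt2 : (List.replicate k (Sum.inr true : Letter)).countP
            (fun l => l.isRight) = k := countP_replicate_letter true k
        rcases hE.fstartLemma _ hch hgw (Or.inr hlast) i (f i) hi1 hi2 hn with
          ⟨m, hm1, hveq, heqf⟩ | ⟨v', hveq, hvrel⟩ | ⟨-, hdF, -⟩
        · -- never exited: k = m, i = i + m, so k = 0
          have hkm : k = m := by
            have := congrArg List.length hveq
            simpa using this
          have him : i = i + m :=
            hE.hfinj i (i + m) hi1 hi2 (by omega) hm1 heqf
          omega
        · -- went around the cycle: length contradiction
          have hv'rep : ∀ x ∈ v', x = (Sum.inr true : Letter) := by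
            intro x hx
            apply List.eq_of_mem_replicate (n := k)
            rw [hveq]
            exact List.mem_append_left _ hx
          have hlen : k = v'.length + (j - i + 1) := by
            have := congrArg List.length hveq
            simpa using this
          have hv'eq : v' = List.replicate v'.length (Sum.inr true) :=
            List.eq_replicate_of_mem hv'rep
          have hkj : k ≤ j := by rw [← hcnt2]; exact hcnt
          -- apply the main lemma to v' from p 0
          have hchv' : List.Chain' LetterOK v' := by
            rw [hv'eq]; exact chain'_replicate_letter _ _
          have hgwv' : GoodW GS v' := by
            intro g hg
            rw [hv'eq] at hg
            exact absurd (List.eq_of_mem_replicate hg) (by simp)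
          have hcntv' : v'.countP (fun l => l.isRight) ≤ j := by
            rw [hv'eq, countP_replicate_letter]
            omega
          rcases hE.mainLemma v' hchv' hgwv' hcntv' (p 0) (f i)
              (hE.hPD 0 (by omega)) hvrel with hL | ⟨i'', hi1'', hi2'', heqf, hbr⟩ | ⟨-, hdF, -⟩
          · -- ends in D′: impossible
            cases hv : v'.length with
            | zero =>
              rw [List.length_eq_zero_iff.mp hv] at hL
              have hL' : p 0 = f i := hL
              exact hE.hFD i hi1 hi2 (hL' ▸ hE.hPD 0 (by omega))
            | succ m =>
              have hh : v'.head? = some (Sum.inr true) := by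
                rw [hv'eq, hv]
                simp [List.replicate_succ]
              exact hE.hFD i hi1 hi2 (hE.hran (wordRel_head_ran s v' hL hh))
          · have hii : i = i'' := hE.hfinj i i'' hi1 hi2 hi1'' hi2'' heqf
            rcases hbr with ⟨v''', hveq', -⟩ | ⟨v''', hveq', -⟩
            · -- length overflow
              have := congrArg List.length hveq'
              simp only [List.length_append, List.length_replicate] at this
              omega
            · -- a backwards letter inside a replicate of forward letters
              have : (Sum.inr false : Letter) ∈ v' := by
                rw [hveq']
                apply List.mem_append_left
                apply List.mem_replicate.mpr
                constructor
                · omega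
                · rfl
              have := hv'rep _ this
              simp at this
          · exact hdF (hE.mem_fset hi1 hi2)
        · exact hdF (hE.mem_fset hi1 hi2)
    · -- block word
      have hg : g ∈ GS := hgw g (by rw [hweq]; exact List.mem_cons_self)
      have hnF : n ∉ FsetOf f j := by
        rintro ⟨i, hi1, hi2, rfl⟩
        rw [hweq] at hn
        obtain ⟨c, hc1, hc2⟩ := hn
        have hc2' : g c = f i := hc2
        have hcDF : c ∈ D' ∨ c ∈ FsetOf f j := by
          cases σ with
          | true => exact hE.pran_t (wordRel_head_ran _ w₁ hc1 hw₁)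
          | false => exact hE.pdom_t (wordRel_head_dom _ w₁ hc1 hw₁)
        rcases hcDF with h | h
        · exact hE.goodG_img_not_fset hg h (hc2' ▸ hE.mem_fset hi1 hi2)
        · obtain ⟨i', hi1', hi2', rfl⟩ := h
          exact hE.goodG_not_fset hg hi1' hi2' (hc2' ▸ hE.mem_fset hi1 hi2)
      have hD : n ∈ D' := by
        rcases hE.pdom_t hstart with h | h
        · exact h
        · exact absurd h hnF
      rcases hE.mainLemma w hch hgw hcnt n n hD hn with hL | ⟨i, hi1, hi2, heq, -⟩ | ⟨hd, -, -⟩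
      · exact hL
      · exact absurd (heq ▸ hE.mem_fset hi1 hi2) hnF
      · exact absurd hD hd
  · intro n hn
    exact wordRel_mono Set.subset_union_left w n n hn

end ZExt

/- ===== Part 7: choice of fresh points ===== -/

lemma relDom_sRel (s : Set (ℕ × ℕ)) : relDom (sRel s) = pdom s := by
  ext a
  constructor
  · rintro ⟨b, hab⟩; exact ⟨(a, b), hab, rfl⟩
  · rintro ⟨⟨a', b⟩, hab, rfl⟩; exact ⟨b, hab⟩

lemma relRan_sRel (s : Set (ℕ × ℕ)) : relRan (sRel s) = pran s := by
  ext a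
  constructor
  · rintro ⟨b, hab⟩; exact ⟨(b, a), hab, rfl⟩
  · rintro ⟨⟨b, a'⟩, hab, rfl⟩; exact ⟨b, hab⟩

lemma exists_fresh (B : Set ℕ) (hB : B.Finite) (GS : Set Perm') (hGS : GS.Finite)
    (hfix : ∀ g ∈ GS, {n : ℕ | g n = n}.Finite) :
    ∀ j : ℕ, ∃ f : ℕ → ℕ,
      (∀ i, 1 ≤ i → i ≤ j → f i ∉ B) ∧
      (∀ i i', 1 ≤ i → i ≤ j → 1 ≤ i' → i' ≤ j → f i = f i' → i = i') ∧
      (∀ g ∈ GS, ∀ i, 1 ≤ i → i ≤ j → g (f i) ∉ B) ∧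
      (∀ g ∈ GS, ∀ i, 1 ≤ i → i ≤ j → ∀ i', 1 ≤ i' → i' ≤ j → g (f i) ≠ f i') := by
  intro j
  induction j with
  | zero => exact ⟨id, fun i h1 h2 => by omega, fun i i' h1 h2 => by omega,
      fun g hg i h1 h2 => by omega, fun g hg i h1 h2 => by omega⟩
  | succ j ih =>
    obtain ⟨f, hf1, hf2, hf3, hf4⟩ := ih
    set I : Set ℕ := f '' Set.Icc 1 j with hI
    have hIfin : I.Finite := (Set.finite_Icc 1 j).image f
    set bad : Set ℕ := B ∪ I ∪ ⋃ g ∈ GS,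
        ((⇑g ⁻¹' B) ∪ (⇑g ⁻¹' I) ∪ (⇑g '' I) ∪ {n | g n = n}) with hbad
    have hbadfin : bad.Finite := by
      apply Set.Finite.union (hB.union hIfin)
      apply Set.Finite.biUnion hGS
      intro g hg
      refine Set.Finite.union (Set.Finite.union (Set.Finite.union ?_ ?_) ?_) (hfix g hg)
      · exact hB.preimage (g.injective.injOn)
      · exact hIfin.preimage (g.injective.injOn)
      · exact hIfin.image _
    obtain ⟨y, hy⟩ := hbadfin.infinite_compl.nonempty
    have hyB : y ∉ B := fun h => hy (Or.inl (Or.inl h))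
    have hyI : y ∉ I := fun h => hy (Or.inl (Or.inr h))
    have hyg : ∀ g ∈ GS, g y ∉ B ∧ g y ∉ I ∧ (∀ x ∈ I, g x ≠ y) ∧ g y ≠ y := by
      intro g hg
      refine ⟨?_, ?_, ?_, ?_⟩
      · intro h
        exact hy (Or.inr (Set.mem_biUnion hg (Or.inl (Or.inl (Or.inl h)))))
      · intro h
        exact hy (Or.inr (Set.mem_biUnion hg (Or.inl (Or.inl (Or.inr h)))))
      · intro x hx h
        exact hy (Or.inr (Set.mem_biUnion hg (Or.inl (Or.inr ⟨x, hx, h⟩))))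
      · intro h
        exact hy (Or.inr (Set.mem_biUnion hg (Or.inr h)))
    classical
    refine ⟨Function.update f (j + 1) y, ?_, ?_, ?_, ?_⟩
    · intro i h1 h2
      by_cases h : i = j + 1
      · rw [h, Function.update_self]; exact hyB
      · rw [Function.update_of_ne h]; exact hf1 i h1 (by omega)
    · intro i i' h1 h2 h1' h2'
      by_cases h : i = j + 1 <;> by_cases h' : i' = j + 1
      · omega
      · rw [h, Function.update_self, Function.update_of_ne h']
        intro heq
        exact absurd (⟨i', Set.mem_Icc.mpr ⟨h1', by omega⟩, heq.symm⟩ : y ∈ I) hyI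
      · rw [h', Function.update_of_ne h, Function.update_self]
        intro heq
        exact absurd (⟨i, Set.mem_Icc.mpr ⟨h1, by omega⟩, heq⟩ : y ∈ I) hyI
      · rw [Function.update_of_ne h, Function.update_of_ne h']
        exact hf2 i i' h1 (by omega) h1' (by omega)
    · intro g hg i h1 h2
      by_cases h : i = j + 1
      · rw [h, Function.update_self]; exact (hyg g hg).1
      · rw [Function.update_of_ne h]; exact hf3 g hg i h1 (by omega)
    · intro g hg i h1 h2 i' h1' h2'
      by_cases h : i = j + 1 <;> by_cases h' : i' = j + 1
      · rw [h, h', Function.update_self]; exact (hyg g hg).2.2.2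
      · rw [h, Function.update_self, Function.update_of_ne h']
        intro heq
        exact (hyg g hg).2.1 (heq ▸ ⟨i', Set.mem_Icc.mpr ⟨h1', by omega⟩, rfl⟩)
      · rw [h', Function.update_of_ne h, Function.update_self]
        exact (hyg g hg).2.2.1 (f i) ⟨i, Set.mem_Icc.mpr ⟨h1, by omega⟩, rfl⟩
      · rw [Function.update_of_ne h, Function.update_of_ne h']
        exact hf4 g hg i h1 (by omega) i' h1' (by omega)

/- ===== Part 8: closed orbits of the extension ===== -/

namespace ZExt

variable {s : Set (ℕ × ℕ)} {p f : ℕ → ℕ} {q j : ℕ} {D' : Set ℕ} {GS : Set Perm'}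
  {m0 : ℕ}

theorem closedOrbits_ext (hE : ZExt s p f q j D' GS)
    (hcons : ∀ α, α < q → (p α, p (α + 1)) ∈ s)
    (hm0orb : relOrbit (sRel s) m0 = p '' Set.Iic q)
    (hm0nc : relOrbit (sRel s) m0 ∉ relClosedOrbits (sRel s)) :
    relClosedOrbits (sRel (s ∪ newpOf p f q j)) =
      insert (p '' Set.Iic q ∪ FsetOf f j) (relClosedOrbits (sRel s)) := by
  set t := s ∪ newpOf p f q j with ht
  set P : Set ℕ := p '' Set.Iic q with hP
  set C : Set ℕ := P ∪ FsetOf f j with hC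
  have hst : s ⊆ t := Set.subset_union_left
  have hm0P : m0 ∈ P := by rw [← hm0orb]; exact mem_relOrbit_self _ _
  have hPD' : ∀ x ∈ P, x ∈ D' := by
    rintro x ⟨α, hα, rfl⟩
    exact hE.hPD α hα
  have hPF : ∀ x ∈ P, x ∉ FsetOf f j := fun x hx hf => hE.fset_not_D hf (hPD' x hx)
  -- new pairs have both coordinates in C
  have hnewC : ∀ z ∈ newpOf p f q j, z.1 ∈ C ∧ z.2 ∈ C := by
    rintro ⟨a, b⟩ (h | ⟨i, h1, h2, h⟩ | h)
    · rw [h]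
      exact ⟨Or.inl ⟨q, Set.mem_Iic.mpr (le_refl q), rfl⟩,
        Or.inr (hE.mem_fset (le_refl 1) hE.jpos)⟩
    · rw [h]
      exact ⟨Or.inr (hE.mem_fset h1 (by omega)), Or.inr (hE.mem_fset (by omega) (by omega))⟩
    · rw [h]
      exact ⟨Or.inr (hE.mem_fset hE.jpos (le_refl j)), Or.inl ⟨0, Set.mem_Iic.mpr (by omega), rfl⟩⟩
  -- old closed orbits avoid C
  have hOC : ∀ O ∈ relClosedOrbits (sRel s), ∀ x ∈ O, x ∉ C := by
    intro O hO x hx hxC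
    rcases hxC with hxP | hxF
    · -- x in the path: orbits coincide, contradiction
      obtain ⟨n, rfl⟩ := hO.1
      have h1 : relOrbit (sRel s) x = relOrbit (sRel s) n := relOrbit_eq_of_mem hx
      have h2 : relOrbit (sRel s) x = relOrbit (sRel s) m0 := by
        apply relOrbit_eq_of_mem
        rw [hm0orb]
        exact hxP
      rw [h1] at h2
      rw [h2] at hO
      exact hm0nc hO
    · exact hE.fset_not_D hxF (hE.hdom (closedOrbit_subset_dom hO hx))
  -- C is closed under t
  have hCcl : RelClosed (sRel t) C := by
    rintro a b (hab | hab)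
    · constructor
      · rintro (haP | haF)
        · left
          have h1 : a ∈ relOrbit (sRel s) m0 := by rw [hm0orb]; exact haP
          have h2 := (relClosed_relOrbit (sRel s) m0 a b hab).1 h1
          rwa [hm0orb] at h2
        · exact absurd (hE.hdom ⟨(a, b), hab, rfl⟩) (hE.fset_not_D haF)
      · rintro (hbP | hbF)
        · left
          have h1 : b ∈ relOrbit (sRel s) m0 := by rw [hm0orb]; exact hbP
          have h2 := (relClosed_relOrbit (sRel s) m0 a b hab).2 h1
          rwa [hm0orb] at h2
        · exact absurd (hE.hran ⟨(a, b), hab, rfl⟩) (hE.fset_not_D hbF)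
    · have := hnewC _ hab
      exact ⟨fun _ => this.2, fun _ => this.1⟩
  -- C is the t-orbit of m0
  have hCorb : relOrbit (sRel t) m0 = C := by
    apply Set.Subset.antisymm
    · exact relOrbit_subset _ _ (Or.inl hm0P) hCcl
    · rintro x (hxP | hxF)
      · exact relOrbit_mono hst m0 (hm0orb ▸ hxP)
      · obtain ⟨i, hi1, hi2, rfl⟩ := hxF
        rw [relOrbit_eq_reach]
        have hpq : Reach (sRel t) m0 (p q) := by
          have : p q ∈ relOrbit (sRel s) m0 := by
            rw [hm0orb]; exact ⟨q, Set.mem_Iic.mpr (le_refl q), rfl⟩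
          have := relOrbit_mono hst m0 this
          rwa [relOrbit_eq_reach] at this
        have key : ∀ i, 1 ≤ i → i ≤ j → Reach (sRel t) m0 (f i) := by
          intro i
          induction i with
          | zero => intro h; omega
          | succ i ih =>
            intro _ hij
            cases Nat.eq_zero_or_pos i with
            | inl h0 =>
              subst h0
              exact Reach.fwd hpq (Or.inr (Or.inl rfl))
            | inr hpos =>
              exact Reach.fwd (ih (by omega) (by omega))
                (Or.inr (Or.inr (Or.inl ⟨i, hpos, by omega, rfl⟩)))
        exact key i hi1 hi2
  -- C is a closed orbit of t
  have hCdomran : C ⊆ relDom (sRel t) ∩ relRan (sRel t) := by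
    rintro x (⟨α, hα, rfl⟩ | ⟨i, hi1, hi2, rfl⟩)
    · simp only [Set.mem_Iic] at hα
      constructor
      · rcases Nat.eq_or_lt_of_le hα with rfl | hlt
        · exact ⟨f 1, Or.inr (Or.inl rfl)⟩
        · exact ⟨p (α + 1), Or.inl (hcons α hlt)⟩
      · rcases Nat.eq_zero_or_pos α with rfl | hpos
        · exact ⟨f j, Or.inr (Or.inr (Or.inr rfl))⟩
        · refine ⟨p (α - 1), Or.inl ?_⟩
          have := hcons (α - 1) (by omega)
          have h1 : α - 1 + 1 = α := by omega
          rwa [h1] at this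
    · constructor
      · rcases Nat.eq_or_lt_of_le hi2 with rfl | hlt
        · exact ⟨p 0, Or.inr (Or.inr (Or.inr rfl))⟩
        · exact ⟨f (i + 1), Or.inr (Or.inr (Or.inl ⟨i, hi1, hlt, rfl⟩))⟩
      · rcases Nat.eq_or_lt_of_le hi1 with rfl | hlt
        · exact ⟨p q, Or.inr (Or.inl rfl)⟩
        · refine ⟨f (i - 1), Or.inr (Or.inr (Or.inl ⟨i - 1, by omega, by omega, ?_⟩))⟩
          have h1 : i - 1 + 1 = i := by omega
          rw [h1]
  have hCmem : C ∈ relClosedOrbits (sRel t) := ⟨⟨m0, hCorb.symm⟩, hCdomran⟩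
  -- old closed orbits stay closed orbits
  have hold : ∀ O ∈ relClosedOrbits (sRel s), O ∈ relClosedOrbits (sRel t) := by
    intro O hO
    obtain ⟨n, rfl⟩ := hO.1
    have hOcl : RelClosed (sRel t) (relOrbit (sRel s) n) := by
      rintro a b (hab | hab)
      · exact relClosed_relOrbit (sRel s) n a b hab
      · have := hnewC _ hab
        exact ⟨fun h => absurd this.1 (hOC _ hO _ h), fun h => absurd this.2 (hOC _ hO _ h)⟩
    have heq : relOrbit (sRel t) n = relOrbit (sRel s) n := by
      apply Set.Subset.antisymm
      · exact relOrbit_subset _ _ (mem_relOrbit_self _ _) hOcl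
      · exact relOrbit_mono hst n
    refine ⟨⟨n, heq.symm⟩, ?_⟩
    intro x hx
    obtain ⟨b1, hb1⟩ := (hO.2 hx).1
    obtain ⟨b2, hb2⟩ := (hO.2 hx).2
    exact ⟨⟨b1, Or.inl hb1⟩, ⟨b2, Or.inl hb2⟩⟩
  -- converse: closed orbits of t are C or old
  apply Set.Subset.antisymm
  · intro O' hO'
    obtain ⟨n', rfl⟩ := hO'.1
    by_cases hn' : n' ∈ C
    · left
      rw [← hCorb]
      rw [← hCorb] at hn'
      exact relOrbit_eq_of_mem hn'
    · right
      have hdisj : ∀ x ∈ relOrbit (sRel t) n', x ∉ C := by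
        intro x hx hxC
        apply hn'
        have h1 : relOrbit (sRel t) x = relOrbit (sRel t) n' := relOrbit_eq_of_mem hx
        have hxm0 : x ∈ relOrbit (sRel t) m0 := by rw [hCorb]; exact hxC
        have h2 : relOrbit (sRel t) x = C := by
          rw [relOrbit_eq_of_mem hxm0, hCorb]
        rw [← h2, h1]
        exact mem_relOrbit_self _ _
      have hOcl : RelClosed (sRel t) (relOrbit (sRel s) n') := by
        rintro a b (hab | hab)
        · exact relClosed_relOrbit (sRel s) n' a b hab
        · have h2 := hnewC _ hab
          have hsub := relOrbit_mono hst n'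
          exact ⟨fun h => absurd h2.1 (hdisj _ (hsub h)),
            fun h => absurd h2.2 (hdisj _ (hsub h))⟩
      have heq : relOrbit (sRel t) n' = relOrbit (sRel s) n' := by
        apply Set.Subset.antisymm
        · exact relOrbit_subset _ _ (mem_relOrbit_self _ _) hOcl
        · exact relOrbit_mono hst n'
      refine ⟨⟨n', heq⟩, ?_⟩
      intro x hx
      have hxC : x ∉ C := hdisj x hx
      have h2 := hO'.2 hx
      constructor
      · obtain ⟨b, hb | hb⟩ := h2.1
        · exact ⟨b, hb⟩
        · exact absurd (hnewC _ hb).1 hxC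
      · obtain ⟨b, hb | hb⟩ := h2.2
        · exact ⟨b, hb⟩
        · exact absurd (hnewC _ hb).2 hxC
  · intro O hO
    rcases hO with rfl | hO
    · exact hCmem
    · exact hold O hO

end ZExt

/- ===== Part 9: assembly ===== -/

lemma fset_eq_image (f : ℕ → ℕ) (j : ℕ) : FsetOf f j = f '' Set.Icc 1 j := by
  ext x
  constructor
  · rintro ⟨i, h1, h2, rfl⟩
    exact ⟨i, Set.mem_Icc.mpr ⟨h1, h2⟩, rfl⟩
  · rintro ⟨i, hi, rfl⟩
    rw [Set.mem_Icc] at hi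
    exact ⟨i, hi.1, hi.2, rfl⟩

theorem statement8' (G : Subgroup Perm') (hG : Cofinitary G) (r : ℕ → Fin 2)
    (s : Set (ℕ × ℕ)) (E : Set Word) (hc : ZrCond G r s E) :
    ∃ t : Set (ℕ × ℕ), ZrCond G r t E ∧ ZLe t E s E ∧
      (relClosedOrbits (sRel s)).ncard < (relClosedOrbits (sRel t)).ncard := by
  obtain ⟨⟨hsfin, hspi, hEfin, hEnice⟩, hnice, hcodes⟩ := hc
  -- the least point not in a closed orbit
  set U := ⋃₀ relClosedOrbits (sRel s) with hU
  have hUfin : U.Finite := sUnion_closedOrbits_finite hsfin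
  set m0 := sInf {n : ℕ | n ∉ U} with hm0
  have hm0mem : m0 ∈ {n : ℕ | n ∉ U} := Nat.sInf_mem hUfin.infinite_compl.nonempty
  have hm0lt : ∀ x, x < m0 → x ∈ U := by
    intro x hx
    by_contra h
    have h2 : m0 ≤ x := Nat.sInf_le h
    omega
  have hm0nc : relOrbit (sRel s) m0 ∉ relClosedOrbits (sRel s) := by
    intro h
    exact hm0mem ⟨relOrbit (sRel s) m0, h, mem_relOrbit_self _ _⟩
  -- the path through m0
  obtain ⟨q, pp, ⟨αm, hαm, hppm⟩, hcons, hp0, hpq, hpinj, horb⟩ :=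
    path_package hspi hsfin m0 hm0nc
  -- the relevant group elements
  set GS : Set Perm' := {g : Perm' | ∃ w ∈ E, Sum.inl g ∈ w ∨ Sum.inl g⁻¹ ∈ w} with hGS
  have hGSfin : GS.Finite := by
    have : GS ⊆ ⋃ w ∈ E, ({g : Perm' | Sum.inl g ∈ w} ∪ {g : Perm' | Sum.inl g⁻¹ ∈ w}) := by
      rintro g ⟨w, hw, h | h⟩
      · exact Set.mem_biUnion hw (Or.inl h)
      · exact Set.mem_biUnion hw (Or.inr h)
    apply Set.Finite.subset _ this
    apply Set.Finite.biUnion hEfin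
    intro w hw
    have h1 : {g : Perm' | Sum.inl g ∈ w}.Finite := by
      have : {g : Perm' | Sum.inl g ∈ w} = Sum.inl ⁻¹' {l : Letter | l ∈ w} := rfl
      rw [this]
      exact (w.finite_toSet).preimage (fun a _ b _ h => Sum.inl.inj h)
    apply h1.union
    have : {g : Perm' | Sum.inl g⁻¹ ∈ w} = (fun g : Perm' => g⁻¹) ⁻¹' {g : Perm' | Sum.inl g ∈ w} := rfl
    rw [this]
    exact h1.preimage (fun a _ b _ h => by simpa using congrArg (fun x : Perm' => x⁻¹) h)
  have hGSprop : ∀ g ∈ GS, g ∈ G ∧ g ≠ 1 := by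
    rintro g ⟨w, hw, h | h⟩
    · exact nice_letters (hEnice w hw) g h
    · obtain ⟨h1, h2⟩ := nice_letters (hEnice w hw) g⁻¹ h
      exact ⟨by simpa using inv_mem h1, fun hh => h2 (by rw [hh]; simp)⟩
  have hGSfix : ∀ g ∈ GS, {n : ℕ | g n = n}.Finite := fun g hg =>
    hG g (hGSprop g hg).1 (hGSprop g hg).2
  have hGinv : ∀ g ∈ GS, g⁻¹ ∈ GS := by
    rintro g ⟨w, hw, h | h⟩
    · exact ⟨w, hw, Or.inr (by simpa using h)⟩
    · exact ⟨w, hw, Or.inl h⟩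
  -- a bound on the number of x's in words of E
  have hMex : ∃ M : ℕ, ∀ w ∈ E, w.countP (fun l => l.isRight) ≤ M := by
    obtain ⟨M, hM⟩ := (hEfin.image (fun w : Word => w.countP (fun l => l.isRight))).bddAbove
    exact ⟨M, fun w hw => hM ⟨w, hw, rfl⟩⟩
  obtain ⟨M, hM⟩ := hMex
  -- the number of old closed orbits
  have hcofin : (relClosedOrbits (sRel s)).Finite := relClosedOrbits_finite hsfin
  set N := (relClosedOrbits (sRel s)).ncard with hN
  -- choose the length of the fresh chain with the right parity
  classical
  set j := if (q + 1 + (M + 1)) % 2 = (r N : ℕ) then M + 1 else M + 2 with hj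
  have hrN2 : (r N : ℕ) < 2 := (r N).isLt
  have hjM : M + 1 ≤ j := by
    rw [hj]; split <;> omega
  have hjpar : (q + 1 + j) % 2 = (r N : ℕ) := by
    rw [hj]
    split
    · assumption
    · omega
  -- choose the fresh points
  set D'' : Set ℕ := pdom s ∪ pran s ∪ pp '' Set.Iic q with hD''
  set B : Set ℕ := D'' ∪ Set.Iic m0 with hB
  have hBfin : B.Finite := by
    apply Set.Finite.union _ (Set.finite_Iic m0)
    exact ((hsfin.image Prod.fst).union (hsfin.image Prod.snd)).union
      ((Set.finite_Iic q).image pp)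
  obtain ⟨f, hf1, hf2, hf3, hf4⟩ := exists_fresh B hBfin GS hGSfin hGSfix j
  -- the extension data
  have hE : ZExt s pp f q j D'' GS := by
    refine ⟨hspi, by omega, ?_, ?_, ?_, ?_, hf2, hpq, hp0, ?_, hf4, hGinv⟩
    · exact fun x hx => Or.inl (Or.inl hx)
    · exact fun x hx => Or.inl (Or.inr hx)
    · intro α hα
      exact Or.inr ⟨α, Set.mem_Iic.mpr hα, rfl⟩
    · intro i h1 h2 hD
      exact hf1 i h1 h2 (Or.inl hD)
    · intro g hg i h1 h2 hD
      exact hf3 g hg i h1 h2 (Or.inl hD)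
  set t := s ∪ newpOf pp f q j with htdef
  set C : Set ℕ := pp '' Set.Iic q ∪ FsetOf f j with hCdef
  have hFgt : ∀ i, 1 ≤ i → i ≤ j → m0 < f i := by
    intro i h1 h2
    have := hf1 i h1 h2
    by_contra h
    exact this (Or.inr (Set.mem_Iic.mpr (by omega)))
  have hPge : ∀ x ∈ pp '' Set.Iic q, m0 ≤ x := by
    intro x hx
    by_contra h
    obtain ⟨O, hO, hxO⟩ := hm0lt x (by omega)
    obtain ⟨n0, hn0⟩ := hO.1
    have h1 : relOrbit (sRel s) x = O := by
      rw [hn0]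
      exact relOrbit_eq_of_mem (hn0 ▸ hxO)
    have h2 : relOrbit (sRel s) x = relOrbit (sRel s) m0 :=
      relOrbit_eq_of_mem (horb ▸ hx)
    rw [h2] at h1
    rw [← h1] at hO
    exact hm0nc hO
  have hm0C : m0 ∈ C := Or.inl ⟨αm, Set.mem_Iic.mpr hαm, hppm⟩
  have hCge : ∀ x ∈ C, m0 ≤ x := by
    rintro x (hx | ⟨i, h1, h2, rfl⟩)
    · exact hPge x hx
    · exact le_of_lt (hFgt i h1 h2)
  have hCinf : sInf C = m0 := by
    apply le_antisymm (Nat.sInf_le hm0C)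
    exact hCge _ (Nat.sInf_mem ⟨m0, hm0C⟩)
  have hCfin : C.Finite := ((Set.finite_Iic q).image pp).union
    (by rw [fset_eq_image]; exact (Set.finite_Icc 1 j).image f)
  -- the closed orbits of t
  have hco := hE.closedOrbits_ext hcons horb hm0nc
  have hCnotold : C ∉ relClosedOrbits (sRel s) := by
    intro h
    exact hm0mem ⟨C, h, hm0C⟩
  -- finiteness of t
  have hnewfin : (newpOf pp f q j).Finite := by
    apply Set.Finite.subset (Set.Finite.insert ((pp q, f 1)) (Set.Finite.insert ((f j, pp 0))
      (((Set.finite_Icc 1 j).image (fun i => (f i, f (i + 1)))))))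
    rintro z (h | ⟨i, h1, h2, h⟩ | h)
    · exact Or.inl h
    · exact Or.inr (Or.inr ⟨i, Set.mem_Icc.mpr ⟨h1, by omega⟩, h.symm⟩)
    · exact Or.inr (Or.inl h)
  have htfin : t.Finite := hsfin.union hnewfin
  -- partial injectivity of t
  have hpqD : pp q ∈ D'' := Or.inr ⟨q, Set.mem_Iic.mpr (le_refl q), rfl⟩
  have hp0D : pp 0 ∈ D'' := Or.inr ⟨0, Set.mem_Iic.mpr (by omega), rfl⟩
  have hfnotD : ∀ i, 1 ≤ i → i ≤ j → f i ∉ D'' := fun i h1 h2 h => hf1 i h1 h2 (Or.inl h)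
  have hparti : PartInj t := by
    constructor
    · rintro a b c (hab | hab) (hac | hac)
      · exact hspi.1 hab hac
      · exfalso
        rcases hac with h | ⟨i, h1, h2, h⟩ | h
        · rw [Prod.mk.injEq] at h; exact hpq ⟨(a, b), hab, h.1⟩
        · rw [Prod.mk.injEq] at h
          exact hfnotD i h1 (by omega) (h.1 ▸ Or.inl (Or.inl ⟨(a, b), hab, rfl⟩))
        · rw [Prod.mk.injEq] at h
          exact hfnotD j hE.jpos (le_refl j) (h.1 ▸ Or.inl (Or.inl ⟨(a, b), hab, rfl⟩))
      · exfalso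
        rcases hab with h | ⟨i, h1, h2, h⟩ | h
        · rw [Prod.mk.injEq] at h; exact hpq ⟨(a, c), hac, h.1⟩
        · rw [Prod.mk.injEq] at h
          exact hfnotD i h1 (by omega) (h.1 ▸ Or.inl (Or.inl ⟨(a, c), hac, rfl⟩))
        · rw [Prod.mk.injEq] at h
          exact hfnotD j hE.jpos (le_refl j) (h.1 ▸ Or.inl (Or.inl ⟨(a, c), hac, rfl⟩))
      · rcases hab with h | ⟨i, h1, h2, h⟩ | h <;>
          rcases hac with h' | ⟨i', h1', h2', h'⟩ | h' <;>
          rw [Prod.mk.injEq] at h h'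
        · rw [h.2, h'.2]
        · exfalso; exact hfnotD i' h1' (by omega) ((h'.1.symm.trans h.1) ▸ hpqD)
        · exfalso; exact hfnotD j hE.jpos (le_refl j) ((h'.1.symm.trans h.1) ▸ hpqD)
        · exfalso; exact hfnotD i h1 (by omega) ((h.1.symm.trans h'.1) ▸ hpqD)
        · have : i = i' := hf2 i i' h1 (by omega) h1' (by omega) (h.1.symm.trans h'.1)
          rw [h.2, h'.2, this]
        · exfalso
          have : i = j := hf2 i j h1 (by omega) hE.jpos (le_refl j) (h.1.symm.trans h'.1)
          omega
        · exfalso; exact hfnotD j hE.jpos (le_refl j) ((h.1.symm.trans h'.1) ▸ hpqD)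
        · exfalso
          have : i' = j := hf2 i' j h1' (by omega) hE.jpos (le_refl j) (h'.1.symm.trans h.1)
          omega
        · rw [h.2, h'.2]
    · rintro a b c (hab | hab) (hac | hac)
      · exact hspi.2 hab hac
      · exfalso
        rcases hac with h | ⟨i, h1, h2, h⟩ | h
        · rw [Prod.mk.injEq] at h
          exact hfnotD 1 (le_refl 1) hE.jpos (h.2 ▸ Or.inl (Or.inr ⟨(a, c), hab, rfl⟩))
        · rw [Prod.mk.injEq] at h
          exact hfnotD (i + 1) (by omega) (by omega) (h.2 ▸ Or.inl (Or.inr ⟨(a, c), hab, rfl⟩))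
        · rw [Prod.mk.injEq] at h; exact hp0 ⟨(a, c), hab, h.2⟩
      · exfalso
        rcases hab with h | ⟨i, h1, h2, h⟩ | h
        · rw [Prod.mk.injEq] at h
          exact hfnotD 1 (le_refl 1) hE.jpos (h.2 ▸ Or.inl (Or.inr ⟨(b, c), hac, rfl⟩))
        · rw [Prod.mk.injEq] at h
          exact hfnotD (i + 1) (by omega) (by omega) (h.2 ▸ Or.inl (Or.inr ⟨(b, c), hac, rfl⟩))
        · rw [Prod.mk.injEq] at h; exact hp0 ⟨(b, c), hac, h.2⟩
      · rcases hab with h | ⟨i, h1, h2, h⟩ | h <;>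
          rcases hac with h' | ⟨i', h1', h2', h'⟩ | h' <;>
          rw [Prod.mk.injEq] at h h'
        · rw [h.1, h'.1]
        · exfalso
          have : 1 = i' + 1 := hf2 1 (i' + 1) (le_refl 1) hE.jpos (by omega) (by omega)
            (h.2.symm.trans h'.2)
          omega
        · exfalso; exact hfnotD 1 (le_refl 1) hE.jpos ((h.2.symm.trans h'.2).symm ▸ hp0D)
        · exfalso
          have : i + 1 = 1 := hf2 (i + 1) 1 (by omega) (by omega) (le_refl 1) hE.jpos
            (h.2.symm.trans h'.2)
          omega
        · have : i + 1 = i' + 1 := hf2 (i + 1) (i' + 1) (by omega) (by omega) (by omega)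
            (by omega) (h.2.symm.trans h'.2)
          rw [h.1, h'.1]
          congr 1
          omega
        · exfalso; exact hfnotD (i + 1) (by omega) (by omega) ((h.2.symm.trans h'.2).symm ▸ hp0D)
        · exfalso; exact hfnotD 1 (le_refl 1) hE.jpos ((h'.2.symm.trans h.2).symm ▸ hp0D)
        · exfalso
          exact hfnotD (i' + 1) (by omega) (by omega) ((h'.2.symm.trans h.2).symm ▸ hp0D)
        · rw [h.1, h'.1]
  refine ⟨t, ⟨⟨htfin, hparti, hEfin, hEnice⟩, ?_, ?_⟩, ⟨Set.subset_union_left, le_refl E, ?_⟩, ?_⟩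
  · -- NiceInj t
    intro O hO
    rw [hco] at hO
    have hUt : ⋃₀ relClosedOrbits (sRel t) = C ∪ U := by
      rw [hco, Set.sUnion_insert, hU]
    have hUtfin : (C ∪ U).Finite := hCfin.union hUfin
    have hcne : {n : ℕ | n ∉ ⋃₀ relClosedOrbits (sRel t)}.Nonempty := by
      rw [hUt]
      exact hUtfin.infinite_compl.nonempty
    have hm1mem := Nat.sInf_mem hcne
    set m1 := sInf {n : ℕ | n ∉ ⋃₀ relClosedOrbits (sRel t)} with hm1
    have hm1nC : m1 ∉ C ∪ U := by
      intro h
      apply hm1mem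
      rw [hUt]
      exact h
    have hm0m1 : m0 < m1 := by
      rcases Nat.lt_trichotomy m0 m1 with h | h | h
      · exact h
      · exact absurd (h ▸ Or.inl hm0C) hm1nC
      · exact absurd (Or.inr (hm0lt m1 h)) hm1nC
    rcases hO with rfl | hO
    · rw [hCinf]
      exact hm0m1
    · have h1 : sInf O < m0 := hnice O hO
      omega
  · -- CodesReal t
    have hsInfOld : ∀ P' ∈ relClosedOrbits (sRel s), sInf P' < m0 := hnice
    intro O hO
    rw [hco] at hO
    rcases hO with rfl | hO
    · -- the new orbit C
      have hidx : {P' ∈ relClosedOrbits (sRel t) | sInf P' < sInf C} =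
          relClosedOrbits (sRel s) := by
        rw [hCinf, hco]
        ext P'
        constructor
        · rintro ⟨hP, h2⟩
          rcases Set.mem_insert_iff.mp hP with rfl | h
          · rw [hCinf] at h2
            omega
          · exact h
        · intro h
          exact ⟨Set.mem_insert_iff.mpr (Or.inr h), hsInfOld P' h⟩
      have hidx2 : orbitIndex t C = N := by
        simp only [orbitIndex]
        rw [hidx]
      have hPinjOn : Set.InjOn pp (Set.Iic q) := by
        intro a ha b hb hab
        exact hpinj a b (Set.mem_Iic.mp ha) (Set.mem_Iic.mp hb) hab
      have hPn : (pp '' Set.Iic q).ncard = q + 1 := by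
        rw [Set.ncard_image_of_injOn hPinjOn, ← Finset.coe_Iic, Set.ncard_coe_finset,
          Nat.card_Iic]
      have hFinjOn : Set.InjOn f (Set.Icc 1 j) := by
        intro a ha b hb hab
        rw [Set.mem_Icc] at ha hb
        exact hf2 a b ha.1 ha.2 hb.1 hb.2 hab
      have hFn : (FsetOf f j).ncard = j := by
        rw [fset_eq_image, Set.ncard_image_of_injOn hFinjOn, ← Finset.coe_Icc,
          Set.ncard_coe_finset, Nat.card_Icc]
        omega
      have hdisjPF : Disjoint (pp '' Set.Iic q) (FsetOf f j) := by
        rw [Set.disjoint_left]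
        rintro x ⟨α, hα, rfl⟩ ⟨i, h1, h2, hx⟩
        exact hfnotD i h1 h2 (hx ▸ Or.inr ⟨α, hα, rfl⟩)
      have hCn : C.ncard = q + 1 + j := by
        rw [hCdef, Set.ncard_union_eq hdisjPF ((Set.finite_Iic q).image pp)
          (by rw [fset_eq_image]; exact (Set.finite_Icc 1 j).image f), hPn, hFn]
      rw [hidx2, hCn]
      exact hjpar
    · -- old orbits
      have hOm0 : sInf O < m0 := hsInfOld O hO
      have hidx : {P' ∈ relClosedOrbits (sRel t) | sInf P' < sInf O} =
          {P' ∈ relClosedOrbits (sRel s) | sInf P' < sInf O} := by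
        rw [hco]
        ext P'
        constructor
        · rintro ⟨hP, h2⟩
          rcases Set.mem_insert_iff.mp hP with rfl | h
          · rw [hCinf] at h2
            omega
          · exact ⟨h, h2⟩
        · rintro ⟨hP, h2⟩
          exact ⟨Set.mem_insert_iff.mpr (Or.inr hP), h2⟩
      have hidx2 : orbitIndex t O = orbitIndex s O := by
        simp only [orbitIndex]
        rw [hidx]
      rw [hidx2]
      exact hcodes O hO
  · -- fixed points
    intro w hw
    exact hE.fixEq G (hEnice w hw) (fun g hg => ⟨w, hw, Or.inl hg⟩)
      (le_trans (hM w hw) (by omega))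
  · -- more closed orbits
    rw [hco, Set.ncard_insert_of_notMem hCnotold hcofin]
    omega

/-- Generic coding: any condition of `Z_G(r)` can be extended to a condition
with strictly more closed orbits. -/
theorem statement8 (G : Subgroup Perm') (hG : Cofinitary G) (r : ℕ → Fin 2)
    (s : Set (ℕ × ℕ)) (E : Set Word) (hc : ZrCond G r s E) :
    ∃ t : Set (ℕ × ℕ), ZrCond G r t E ∧ ZLe t E s E ∧
      (relClosedOrbits (sRel s)).ncard < (relClosedOrbits (sRel t)).ncard := by
  exact statement8' G hG r s E hc

end
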